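/- Fix m ≥ 1 and let λ ⊆ mδ_n be a partition. The generating function D_n^{(m),λ}(z;q) = Σ_T q^{dinv_m(T)} z^T, summed over all semistandard tableaux T of shape (λ+(1^n))/λ with z^T = Π_x z_{T(x)}, is a symmetric function of z = (z_1, z_2, …). Equivalently: for any two finite sequences μ and ν of positive integers with total sum n that are rearrangements of one another, Σ_{T of content μ} q^{dinv_m(T)} = Σ_{T of content ν} q^{dinv_m(T)}. -/

import Mathlib

open Classical

namespace HHL

/-- `d_m` of a cell `(i, j)` is `m*i + j`. -/
def dm (m : ℕ) (x : ℕ × ℕ) : ℕ := m * x.1 + x.2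

/-- The reverse diagonal lexicographic order `x <_d y`. -/
def dLess (m : ℕ) (x y : ℕ × ℕ) : Prop :=
  dm m y < dm m x ∨ (dm m x = dm m y ∧ x.2 < y.2)

/-- The number of d-inversions contributed by a pair of entries with the smaller
entry at the cell `x = (i,j)` and the larger entry at the cell `y = (i',j')`:
`max (0, m - |d_m(y) - d_m(x)|)` if `j > j'`, and
`max (0, m - |d_m(y) - d_m(x) - 1|)` if `j < j'`. -/
def contrib (m : ℕ) (x y : ℕ × ℕ) : ℕ :=
  if y.2 < x.2 then ((m : ℤ) - |(dm m y : ℤ) - (dm m x : ℤ)|).toNat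
  else if x.2 < y.2 then ((m : ℤ) - |(dm m y : ℤ) - (dm m x : ℤ) - 1|).toNat
  else 0

/-- `lam` is (the row-length function of) a partition with at most `n` parts whose
Young diagram is contained in the staircase `m·δ_n = (m(n-1), m(n-2), …, m, 0)`. -/
def IsShape (m n : ℕ) (lam : Fin n → ℕ) : Prop :=
  (∀ i j : Fin n, i ≤ j → lam j ≤ lam i) ∧
  ∀ i : Fin n, lam i ≤ m * (n - 1 - (i : ℕ))

/-- The cell `x_i = (i, λ_{i+1})` of the vertical strip `(λ+(1^n))/λ`. -/
def cell {n : ℕ} (lam : Fin n → ℕ) (i : Fin n) : ℕ × ℕ := ((i : ℕ), lam i)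

/-- The cells `x_i` and `x_j` are (consecutive cells) in the same column. -/
def SameCol {n : ℕ} (lam : Fin n → ℕ) (i j : Fin n) : Prop :=
  (i : ℕ) + 1 = (j : ℕ) ∧ lam i = lam j

/-- A semistandard tableau of the vertical strip `(λ+(1^n))/λ`: entries are
positive integers, strictly increasing up each column. -/
def IsSSYT {n : ℕ} (lam : Fin n → ℕ) (T : Fin n → ℕ) : Prop :=
  (∀ i, 1 ≤ T i) ∧ ∀ i j : Fin n, SameCol lam i j → T i < T j

/-- `T` has content `μ`: there are `μ_a` entries equal to `a` (the list `μ` is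
indexed from `0`, so `μ.getD (a-1) 0` is the multiplicity of the letter `a ≥ 1`). -/
def HasContent {n : ℕ} (T : Fin n → ℕ) (μ : List ℕ) : Prop :=
  ∀ a : ℕ, Set.ncard {i : Fin n | T i = a + 1} = μ.getD a 0

/-- An admissible ordered pair of cells `(x, y)`, `x = (i,j)`, `y = (i',j')`:
either (i) `d(y) = d(x)` and `j > j'`, or (ii) `d(y) = d(x) + 1` and `j < j'`. -/
def Admissible (x y : ℕ × ℕ) : Prop :=
  (y.1 + y.2 = x.1 + x.2 ∧ y.2 < x.2) ∨ (y.1 + y.2 = x.1 + x.2 + 1 ∧ x.2 < y.2)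

/-- The number of d-inversions of a tableau of the vertical strip (`m = 1`):
admissible pairs of cells `(x,y)` with `T(x) < T(y)`. -/
noncomputable def dinv {n : ℕ} (lam : Fin n → ℕ) (T : Fin n → ℕ) : ℕ :=
  Set.ncard {p : Fin n × Fin n |
    Admissible (cell lam p.1) (cell lam p.2) ∧ T p.1 < T p.2}

/-- The statistic `dinv_m` of a (semistandard) tableau of the vertical strip:
each pair of unequal entries contributes `contrib` with the smaller entry first;
each pair of equal entries contributes as would a pair of unequal entries with
the smaller entry at the `<_d`-smaller of the two cells. -/
noncomputable def dinvm (m : ℕ) {n : ℕ} (lam : Fin n → ℕ) (T : Fin n → ℕ) : ℕ :=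
  ∑ p : Fin n × Fin n,
    if T p.1 < T p.2 then contrib m (cell lam p.1) (cell lam p.2)
    else if T p.1 = T p.2 ∧ p.1 < p.2 then
      (if dLess m (cell lam p.1) (cell lam p.2) then
        contrib m (cell lam p.1) (cell lam p.2)
      else contrib m (cell lam p.2) (cell lam p.1))
    else 0

/-- A standard tableau of the vertical strip: a semistandard tableau which is a
bijection onto `{1, …, n}`. -/
def IsStandard {n : ℕ} (lam : Fin n → ℕ) (S : Fin n → ℕ) : Prop :=
  IsSSYT lam S ∧ Function.Injective S ∧ ∀ i, S i ≤ n

/-- The set of d-descents of a standard tableau `S`: letters `a` such that the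
cells `x`, `y` with `S(x) = a`, `S(y) = a + 1` satisfy `x >_d y`. -/
def ddSet (m : ℕ) {n : ℕ} (lam : Fin n → ℕ) (S : Fin n → ℕ) : Set ℕ :=
  {a | ∃ i j : Fin n, S i = a ∧ S j = a + 1 ∧ dLess m (cell lam j) (cell lam i)}


section Core
variable {α : Type} [DecidableEq α]

/-- number of ascending edges: edges `(u,v)` with `u ∉ W`, `v ∈ W`. -/
def ascE (E : Finset (α × α)) (W : Finset α) : ℕ :=
  (E.filter (fun e => e.1 ∉ W ∧ e.2 ∈ W)).card

/-- the set of subsets `W ⊆ V` with lock pattern `L`, `|W| = p`, `asc = k`. -/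
noncomputable def cntSet (V : Finset α) (E : Finset (α × α)) (L : List (α × α))
    (p k : ℕ) : Finset (Finset α) :=
  V.powerset.filter (fun W =>
      (∀ l ∈ L, l.1 ∉ W ∧ l.2 ∈ W) ∧ W.card = p ∧ ascE E W = k)

/-- count of subsets `W ⊆ V` with lock pattern `L`, `|W| = p`, `asc = k`. -/
noncomputable def cnt (V : Finset α) (E : Finset (α × α)) (L : List (α × α))
    (p k : ℕ) : ℕ :=
  (cntSet V E L p k).card

lemma mem_cntSet {V : Finset α} {E : Finset (α × α)} {L : List (α × α)} {p k : ℕ}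
    {W : Finset α} :
    W ∈ cntSet V E L p k ↔
    W ⊆ V ∧ (∀ l ∈ L, l.1 ∉ W ∧ l.2 ∈ W) ∧ W.card = p ∧ ascE E W = k := by
  unfold cntSet
  simp [Finset.mem_filter, Finset.mem_powerset]

lemma ascE_congr (E : Finset (α × α)) (W W' : Finset α)
    (h : ∀ e ∈ E, (e.1 ∈ W ↔ e.1 ∈ W') ∧ (e.2 ∈ W ↔ e.2 ∈ W')) :
    ascE E W = ascE E W' := by
  unfold ascE
  congr 1
  apply Finset.filter_congr
  intro e he
  have := h e he
  constructor
  · intro hh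
    exact ⟨fun hm => hh.1 ((this.1).mpr hm), (this.2).mp hh.2⟩
  · intro hh
    exact ⟨fun hm => hh.1 ((this.1).mp hm), (this.2).mpr hh.2⟩

lemma asc_lock_split (κ : α → ℕ) (V : Finset α) (E : Finset (α × α)) (s t : α)
    (hE : ∀ e ∈ E, e.1 ∈ V ∧ e.2 ∈ V ∧ κ e.1 < κ e.2)
    (hLE : ∀ u ∈ V, ((s, u) ∈ E ↔ κ s < κ u ∧ κ u < κ t) ∧
        ((u, t) ∈ E ↔ κ s < κ u ∧ κ u < κ t))
    (W : Finset α) (hsW : s ∉ W) (htW : t ∈ W) :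
    ascE E W = (V.filter (fun u => κ s < κ u ∧ κ u < κ t)).card
      + ascE (E.filter (fun e => e.1 ≠ s ∧ e.1 ≠ t ∧ e.2 ≠ s ∧ e.2 ≠ t)) W := by
  classical
  set betw := V.filter (fun u => κ s < κ u ∧ κ u < κ t) with hbetw
  set P : α × α → Prop := fun e => e.1 ≠ s ∧ e.1 ≠ t ∧ e.2 ≠ s ∧ e.2 ≠ t with hP
  set pred : α × α → Prop := fun e => e.1 ∉ W ∧ e.2 ∈ W with hpred
  have hsplit : E.filter P ∪ E.filter (fun e => ¬ P e) = E :=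
    Finset.filter_union_filter_not_eq P E
  have hdisj : Disjoint (E.filter P) (E.filter (fun e => ¬ P e)) :=
    Finset.disjoint_filter_filter_not E E P
  have hfu : E.filter pred = (E.filter P).filter pred ∪ (E.filter (fun e => ¬ P e)).filter pred := by
    rw [← Finset.filter_union, hsplit]
  have h1 : ascE E W
      = ((E.filter (fun e => ¬ P e)).filter pred).card + ascE (E.filter P) W := by
    unfold ascE
    show (E.filter pred).card = _ + ((E.filter P).filter pred).card
    rw [hfu, Finset.card_union_of_disjoint
      (hdisj.mono (Finset.filter_subset _ _) (Finset.filter_subset _ _))]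
    ring
  rw [h1]
  congr 1
  -- show the touching part has card = betw.card
  have himg : (E.filter (fun e => ¬ P e)).filter pred
      = ((betw.filter (fun u => u ∈ W)).image (fun u => (s, u)))
        ∪ ((betw.filter (fun u => u ∉ W)).image (fun u => (u, t))) := by
    ext e
    simp only [Finset.mem_filter, Finset.mem_union, Finset.mem_image, hP, hpred]
    constructor
    · rintro ⟨⟨heE, hnp⟩, h1, h2⟩
      rcases hE e heE with ⟨he1V, he2V, heκ⟩
      by_cases hc1 : e.1 = s
      · left
        refine ⟨e.2, ?_, ?_⟩
        · have := ((hLE e.2 he2V).1).mp (by rwa [← hc1])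
          exact ⟨Finset.mem_filter.mpr ⟨he2V, this⟩, h2⟩
        · rw [← hc1]
      · by_cases hc2 : e.2 = t
        · right
          refine ⟨e.1, ?_, ?_⟩
          · have := ((hLE e.1 he1V).2).mp (by rwa [← hc2])
            exact ⟨Finset.mem_filter.mpr ⟨he1V, this⟩, h1⟩
          · rw [← hc2]
        · exfalso
          push_neg at hnp
          rcases Decidable.em (e.1 = t) with h | h
          · exact h1 (h ▸ htW)
          · rcases Decidable.em (e.2 = s) with h' | h'
            · exact hsW (h' ▸ h2)
            · exact hc2 (hnp hc1 h h')
    · rintro (⟨u, hu, rfl⟩ | ⟨u, hu, rfl⟩)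
      · rcases hu with ⟨hub, huW⟩
        rcases Finset.mem_filter.mp hub with ⟨huV, huk⟩
        have heE : (s, u) ∈ E := ((hLE u huV).1).mpr huk
        refine ⟨⟨heE, ?_⟩, hsW, huW⟩
        intro hpp
        exact hpp.1 rfl
      · rcases hu with ⟨hub, huW⟩
        rcases Finset.mem_filter.mp hub with ⟨huV, huk⟩
        have heE : (u, t) ∈ E := ((hLE u huV).2).mpr huk
        refine ⟨⟨heE, ?_⟩, huW, htW⟩
        intro hpp
        exact hpp.2.2.2 rfl
  rw [himg]
  have hinj1 : Function.Injective (fun u : α => (s, u)) := by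
    intro a b h; simpa using h
  have hinj2 : Function.Injective (fun u : α => (u, t)) := by
    intro a b h; simpa using h
  have hdisj2 : Disjoint ((betw.filter (fun u => u ∈ W)).image (fun u => (s, u)))
      ((betw.filter (fun u => u ∉ W)).image (fun u => (u, t))) := by
    rw [Finset.disjoint_left]
    rintro e he1 he2
    rcases Finset.mem_image.mp he1 with ⟨u, hu, rfl⟩
    rcases Finset.mem_image.mp he2 with ⟨u', hu', he⟩
    rcases Finset.mem_filter.mp hu with ⟨hub, huW⟩
    have : u = t := by
      have := congrArg Prod.snd he; simpa using this.symm
    rcases Finset.mem_filter.mp hub with ⟨_, _, hlt⟩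
    rw [this] at hlt
    exact lt_irrefl _ hlt
  rw [Finset.card_union_of_disjoint hdisj2,
    Finset.card_image_of_injective _ hinj1, Finset.card_image_of_injective _ hinj2,
    Finset.card_filter_add_card_filter_not]


lemma cnt_lock (κ : α → ℕ) (V : Finset α) (E : Finset (α × α)) (s t : α) (L' : List (α × α))
    (hE : ∀ e ∈ E, e.1 ∈ V ∧ e.2 ∈ V ∧ κ e.1 < κ e.2)
    (hsV : s ∈ V) (htV : t ∈ V) (hst : s ≠ t)
    (hLd : ∀ l ∈ L', s ≠ l.1 ∧ s ≠ l.2 ∧ t ≠ l.1 ∧ t ≠ l.2)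
    (hLE : ∀ u ∈ V, ((s, u) ∈ E ↔ κ s < κ u ∧ κ u < κ t) ∧
        ((u, t) ∈ E ↔ κ s < κ u ∧ κ u < κ t))
    (p k : ℕ) (hp : 1 ≤ p)
    (hk : (V.filter (fun u => κ s < κ u ∧ κ u < κ t)).card ≤ k) :
    cnt V E ((s, t) :: L') p k
      = cnt ((V.erase s).erase t)
          (E.filter (fun e => e.1 ≠ s ∧ e.1 ≠ t ∧ e.2 ≠ s ∧ e.2 ≠ t)) L'
          (p - 1) (k - (V.filter (fun u => κ s < κ u ∧ κ u < κ t)).card) := by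
  classical
  set c := (V.filter (fun u => κ s < κ u ∧ κ u < κ t)).card with hc
  set E'' := E.filter (fun e => e.1 ≠ s ∧ e.1 ≠ t ∧ e.2 ≠ s ∧ e.2 ≠ t) with hE''
  have hascc : ∀ W : Finset α, s ∉ W → t ∈ W → ascE E W = c + ascE E'' W :=
    fun W h1 h2 => asc_lock_split κ V E s t hE hLE W h1 h2
  have hcongr : ∀ (W : Finset α), t ∉ W → ascE E'' (insert t W) = ascE E'' W := by
    intro W htW
    apply ascE_congr
    intro e he
    rcases Finset.mem_filter.mp he with ⟨-, h1, h2, h3, h4⟩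
    constructor
    · simp [Finset.mem_insert, h2]
    · simp [Finset.mem_insert, h4]
  unfold cnt
  apply Finset.card_bij (fun W _ => W.erase t)
  · -- maps into
    intro W hW
    rcases mem_cntSet.mp hW with ⟨hWV, hlocks, hcard, hasc⟩
    have hhead := hlocks (s, t) (List.mem_cons_self)
    have hsW : s ∉ W := hhead.1
    have htW : t ∈ W := hhead.2
    apply mem_cntSet.mpr
    refine ⟨?_, ?_, ?_, ?_⟩
    · intro u hu
      rcases Finset.mem_erase.mp hu with ⟨hut, huW⟩
      exact Finset.mem_erase.mpr ⟨hut, Finset.mem_erase.mpr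
        ⟨fun h => hsW (h ▸ huW), hWV huW⟩⟩
    · intro l hl
      have hl' := hlocks l (List.mem_cons_of_mem _ hl)
      refine ⟨fun h => hl'.1 (Finset.mem_of_mem_erase h), ?_⟩
      exact Finset.mem_erase.mpr ⟨fun h => (hLd l hl).2.2.2 h.symm, hl'.2⟩
    · rw [Finset.card_erase_of_mem htW, hcard]
    · have := hascc W hsW htW
      have h2 : ascE E'' (W.erase t) = ascE E'' W := by
        have := hcongr (W.erase t) (Finset.notMem_erase _ _)
        rw [Finset.insert_erase htW] at this
        exact this.symm
      omega
  · -- injective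
    intro W1 hW1 W2 hW2 heq
    have h1 := (mem_cntSet.mp hW1).2.1 (s, t) (List.mem_cons_self)
    have h2 := (mem_cntSet.mp hW2).2.1 (s, t) (List.mem_cons_self)
    rw [← Finset.insert_erase h1.2, ← Finset.insert_erase h2.2, heq]
  · -- surjective
    intro W'' hW''
    rcases mem_cntSet.mp hW'' with ⟨hWV, hlocks, hcard, hasc⟩
    have htW'' : t ∉ W'' := fun h =>
      Finset.notMem_erase t (V.erase s) (hWV h)
    have hsW'' : s ∉ W'' := fun h => by
      have := Finset.mem_of_mem_erase (hWV h)
      exact Finset.notMem_erase s V this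
    refine ⟨insert t W'', ?_, Finset.erase_insert htW''⟩
    apply mem_cntSet.mpr
    refine ⟨?_, ?_, ?_, ?_⟩
    · apply Finset.insert_subset htV
      exact hWV.trans ((Finset.erase_subset _ _).trans (Finset.erase_subset _ _))
    · intro l hl
      rcases List.mem_cons.mp hl with h | h
      · rw [h]
        refine ⟨?_, Finset.mem_insert_self _ _⟩
        simp only [Finset.mem_insert]
        rintro (h' | h')
        · exact hst h'
        · exact hsW'' h'
      · have hl' := hlocks l h
        refine ⟨?_, Finset.mem_insert_of_mem hl'.2⟩
        simp only [Finset.mem_insert]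
        rintro (h' | h')
        · exact (hLd l h).2.2.1 h'.symm
        · exact hl'.1 h'
    · rw [Finset.card_insert_of_notMem htW'', hcard]
      omega
    · have hins : s ∉ insert t W'' := by
        simp only [Finset.mem_insert]
        rintro (h' | h')
        · exact hst h'
        · exact hsW'' h'
      rw [hascc (insert t W'') hins (Finset.mem_insert_self _ _),
        hcongr W'' htW'', hasc]
      omega

lemma cnt_lock_low (κ : α → ℕ) (V : Finset α) (E : Finset (α × α)) (s t : α)
    (L' : List (α × α))
    (hE : ∀ e ∈ E, e.1 ∈ V ∧ e.2 ∈ V ∧ κ e.1 < κ e.2)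
    (hLE : ∀ u ∈ V, ((s, u) ∈ E ↔ κ s < κ u ∧ κ u < κ t) ∧
        ((u, t) ∈ E ↔ κ s < κ u ∧ κ u < κ t))
    (p k : ℕ) (hk : k < (V.filter (fun u => κ s < κ u ∧ κ u < κ t)).card) :
    cnt V E ((s, t) :: L') p k = 0 := by
  unfold cnt cntSet
  rw [Finset.card_eq_zero]
  apply Finset.eq_empty_of_forall_notMem
  intro W hW
  rcases mem_cntSet.mp hW with ⟨hWV, hlocks, hcard, hasc⟩
  have hhead := hlocks (s, t) (List.mem_cons_self)
  have := asc_lock_split κ V E s t hE hLE W hhead.1 hhead.2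
  omega

lemma cnt_lock_end (V : Finset α) (E : Finset (α × α)) (s t : α) (L' : List (α × α))
    (hsV : s ∈ V) (k : ℕ) :
    cnt V E ((s, t) :: L') 0 k = 0 ∧ cnt V E ((s, t) :: L') V.card k = 0 := by
  constructor
  · unfold cnt cntSet
    rw [Finset.card_eq_zero]
    apply Finset.eq_empty_of_forall_notMem
    intro W hW
    rcases mem_cntSet.mp hW with ⟨hWV, hlocks, hcard, hasc⟩
    have hhead := hlocks (s, t) (List.mem_cons_self)
    rw [Finset.card_eq_zero] at hcard
    rw [hcard] at hhead
    exact absurd hhead.2 (Finset.notMem_empty t)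
  · unfold cnt cntSet
    rw [Finset.card_eq_zero]
    apply Finset.eq_empty_of_forall_notMem
    intro W hW
    rcases mem_cntSet.mp hW with ⟨hWV, hlocks, hcard, hasc⟩
    have hhead := hlocks (s, t) (List.mem_cons_self)
    have : W = V := Finset.eq_of_subset_of_card_le hWV (le_of_eq hcard.symm)
    exact hhead.1 (this ▸ hsV)


lemma core_symm (κ : α → ℕ) (hκ : Function.Injective κ) :
    ∀ (N : ℕ) (V : Finset α) (E : Finset (α × α)) (L : List (α × α)),
      E.card + V.card ≤ N →
      (∀ e ∈ E, e.1 ∈ V ∧ e.2 ∈ V ∧ κ e.1 < κ e.2) →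
      (∀ e ∈ E, ∀ w ∈ V, κ e.1 < κ w → κ w < κ e.2 → (e.1, w) ∈ E ∧ (w, e.2) ∈ E) →
      (∀ l ∈ L, l.1 ∈ V ∧ l.2 ∈ V ∧ κ l.1 < κ l.2) →
      List.Pairwise (fun l l' : α × α =>
        l.1 ≠ l'.1 ∧ l.1 ≠ l'.2 ∧ l.2 ≠ l'.1 ∧ l.2 ≠ l'.2) L →
      (∀ l ∈ L, ∀ u ∈ V, ((l.1, u) ∈ E ↔ κ l.1 < κ u ∧ κ u < κ l.2) ∧
          ((u, l.2) ∈ E ↔ κ l.1 < κ u ∧ κ u < κ l.2)) →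
      ∀ p k, p ≤ V.card → cnt V E L p k = cnt V E L (V.card - p) k := by
  intro N
  induction N with
  | zero =>
    intro V E L hsize hE hconv hLV hLpw hLE p k hp
    have hV : V.card = 0 := by omega
    have hp0 : p = 0 := by omega
    rw [hp0, hV]
  | succ N ih =>
    intro V E L hsize hE hconv hLV hLpw hLE p k hp
    match L with
    | (s, t) :: L' =>
      -- lock removal case
      obtain ⟨hsV, htV, hκst⟩ := hLV (s, t) (List.mem_cons_self)
      have hst : s ≠ t := fun h => by rw [h] at hκst; exact lt_irrefl _ hκst
      have hLd : ∀ l ∈ L', s ≠ l.1 ∧ s ≠ l.2 ∧ t ≠ l.1 ∧ t ≠ l.2 :=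
        (List.pairwise_cons.mp hLpw).1
      have hLEst : ∀ u ∈ V, ((s, u) ∈ E ↔ κ s < κ u ∧ κ u < κ t) ∧
          ((u, t) ∈ E ↔ κ s < κ u ∧ κ u < κ t) :=
        fun u hu => hLE (s, t) (List.mem_cons_self) u hu
      set c := (V.filter (fun u => κ s < κ u ∧ κ u < κ t)).card with hcdef
      by_cases hck : k < c
      · rw [cnt_lock_low κ V E s t L' hE hLEst p k hck,
          cnt_lock_low κ V E s t L' hE hLEst (V.card - p) k hck]
      · have h2V : 2 ≤ V.card := by
          have : ({s, t} : Finset α) ⊆ V := by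
            intro u hu
            rcases Finset.mem_insert.mp hu with h | h
            · exact h ▸ hsV
            · exact (Finset.mem_singleton.mp h) ▸ htV
          have := Finset.card_le_card this
          rwa [Finset.card_insert_of_notMem (by simpa using hst),
            Finset.card_singleton] at this
        by_cases hp0 : p = 0
        · rw [hp0]
          have h1 := (cnt_lock_end V E s t L' hsV k).1
          have h2 := (cnt_lock_end V E s t L' hsV k).2
          rw [Nat.sub_zero, h1, h2]
        · by_cases hpV : p = V.card
          · rw [hpV, Nat.sub_self]
            have h1 := (cnt_lock_end V E s t L' hsV k).1
            have h2 := (cnt_lock_end V E s t L' hsV k).2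
            rw [h1, h2]
          · -- main lock case : 1 ≤ p ≤ V.card - 1
            have hp1 : 1 ≤ p := by omega
            have hpV1 : p ≤ V.card - 1 := by omega
            set V'' := (V.erase s).erase t with hV''def
            set E'' := E.filter
              (fun e => e.1 ≠ s ∧ e.1 ≠ t ∧ e.2 ≠ s ∧ e.2 ≠ t) with hE''def
            have htV' : t ∈ V.erase s := Finset.mem_erase.mpr ⟨fun h => hst h.symm, htV⟩
            have hVcard : V''.card = V.card - 2 := by
              rw [hV''def, Finset.card_erase_of_mem htV', Finset.card_erase_of_mem hsV]
              omega
            have hnotmem : ∀ u ∈ V'', u ≠ s ∧ u ≠ t := by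
              intro u hu
              rcases Finset.mem_erase.mp hu with ⟨hut, hu'⟩
              rcases Finset.mem_erase.mp hu' with ⟨hus, _⟩
              exact ⟨hus, hut⟩
            have hmemV'' : ∀ u ∈ V, u ≠ s → u ≠ t → u ∈ V'' :=
              fun u hu h1 h2 => Finset.mem_erase.mpr ⟨h2, Finset.mem_erase.mpr ⟨h1, hu⟩⟩
            have hVsub : V'' ⊆ V :=
              (Finset.erase_subset _ _).trans (Finset.erase_subset _ _)
            rw [cnt_lock κ V E s t L' hE hsV htV hst hLd hLEst p k hp1 (by omega),
              cnt_lock κ V E s t L' hE hsV htV hst hLd hLEst (V.card - p) k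
                (by omega) (by omega)]
            have hres := ih V'' E'' L'
              (by
                have h1 : E''.card ≤ E.card := Finset.card_filter_le _ _
                omega)
              (by
                intro e he
                rcases Finset.mem_filter.mp he with ⟨heE, h1, h2, h3, h4⟩
                obtain ⟨hv1, hv2, hκe⟩ := hE e heE
                exact ⟨hmemV'' _ hv1 h1 h2, hmemV'' _ hv2 h3 h4, hκe⟩)
              (by
                intro e he w hw h1 h2
                rcases Finset.mem_filter.mp he with ⟨heE, he1, he2, he3, he4⟩
                obtain ⟨hw1, hw2⟩ := hnotmem w hw
                obtain ⟨hA, hB⟩ := hconv e heE w (hVsub hw) h1 h2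
                exact ⟨Finset.mem_filter.mpr ⟨hA, he1, he2, hw1, hw2⟩,
                  Finset.mem_filter.mpr ⟨hB, hw1, hw2, he3, he4⟩⟩)
              (by
                intro l hl
                obtain ⟨hv1, hv2, hκl⟩ := hLV l (List.mem_cons_of_mem _ hl)
                obtain ⟨hd1, hd2, hd3, hd4⟩ := hLd l hl
                exact ⟨hmemV'' _ hv1 (Ne.symm hd1) (Ne.symm hd3),
                  hmemV'' _ hv2 (Ne.symm hd2) (Ne.symm hd4), hκl⟩)
              ((List.pairwise_cons.mp hLpw).2)
              (by
                intro l hl u hu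
                obtain ⟨hd1, hd2, hd3, hd4⟩ := hLd l hl
                obtain ⟨hu1, hu2⟩ := hnotmem u hu
                have horig := hLE l (List.mem_cons_of_mem _ hl) u (hVsub hu)
                constructor
                · constructor
                  · intro h
                    exact horig.1.mp (Finset.mem_of_mem_filter _ h)
                  · intro h
                    exact Finset.mem_filter.mpr ⟨horig.1.mpr h,
                      Ne.symm hd1, Ne.symm hd3, hu1, hu2⟩
                · constructor
                  · intro h
                    exact horig.2.mp (Finset.mem_of_mem_filter _ h)
                  · intro h
                    exact Finset.mem_filter.mpr ⟨horig.2.mpr h,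
                      hu1, hu2, Ne.symm hd2, Ne.symm hd4⟩)
              (p - 1) (k - c) (by omega)
            rw [hres]
            congr 1
            omega
    | [] =>
      rcases E.eq_empty_or_nonempty with hEe | hEne
      · -- base case
        subst hEe
        have hcnt : ∀ p' k', cnt V (∅ : Finset (α × α)) ([] : List (α × α)) p' k'
            = if k' = 0 then V.card.choose p' else 0 := by
          intro p' k'
          unfold cnt cntSet
          by_cases hk' : k' = 0
          · subst hk'
            rw [if_pos rfl]
            have : V.powerset.filter (fun W =>
                (∀ l ∈ ([] : List (α × α)), l.1 ∉ W ∧ l.2 ∈ W) ∧ W.card = p'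
                  ∧ ascE (∅ : Finset (α × α)) W = 0)
                = V.powersetCard p' := by
              rw [Finset.powersetCard_eq_filter]
              apply Finset.filter_congr
              intro W hW
              simp [ascE]
            rw [this, Finset.card_powersetCard]
          · rw [if_neg hk']
            rw [Finset.card_eq_zero]
            apply Finset.eq_empty_of_forall_notMem
            intro W hW
            rcases mem_cntSet.mp hW with ⟨-, -, -, hasc⟩
            simp [ascE] at hasc
            exact hk' hasc.symm
        rw [hcnt p k, hcnt (V.card - p) k]
        by_cases hk' : k = 0
        · subst hk'
          rw [if_pos rfl, if_pos rfl, Nat.choose_symm hp]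
        · rw [if_neg hk', if_neg hk']
      · -- edge removal case
        obtain ⟨t, htmem, htmax⟩ :=
          (E.image Prod.snd).exists_max_image κ ((Finset.image_nonempty).mpr hEne)
        obtain ⟨e0, he0E, he0t⟩ := Finset.mem_image.mp htmem
        have he0f : e0 ∈ E.filter (fun e => e.2 = t) :=
          Finset.mem_filter.mpr ⟨he0E, he0t⟩
        obtain ⟨s, hsmem, hsmin⟩ :=
          ((E.filter (fun e => e.2 = t)).image Prod.fst).exists_min_image κ
            ⟨e0.1, Finset.mem_image_of_mem _ he0f⟩
        obtain ⟨e1, he1, he1s⟩ := Finset.mem_image.mp hsmem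
        rcases Finset.mem_filter.mp he1 with ⟨he1E, he1t⟩
        have hstE : (s, t) ∈ E := by
          have : e1 = (s, t) := by
            rw [← he1s, ← he1t]
          rwa [this] at he1E
        have hmax' : ∀ e ∈ E, κ e.2 ≤ κ t :=
          fun e he => htmax _ (Finset.mem_image_of_mem _ he)
        have hmin' : ∀ e ∈ E, e.2 = t → κ s ≤ κ e.1 :=
          fun e he h2 => hsmin _ (Finset.mem_image_of_mem _
            (Finset.mem_filter.mpr ⟨he, h2⟩))
        obtain ⟨hsV, htV, hκst⟩ := hE (s, t) hstE
        set E' := E.erase (s, t) with hE'def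
        have hE' : ∀ e ∈ E', e.1 ∈ V ∧ e.2 ∈ V ∧ κ e.1 < κ e.2 :=
          fun e he => hE e (Finset.mem_of_mem_erase he)
        have hconv' : ∀ e ∈ E', ∀ w ∈ V, κ e.1 < κ w → κ w < κ e.2 →
            (e.1, w) ∈ E' ∧ (w, e.2) ∈ E' := by
          intro e he w hw h1 h2
          have heE := Finset.mem_of_mem_erase he
          obtain ⟨hA, hB⟩ := hconv e heE w hw h1 h2
          constructor
          · refine Finset.mem_erase.mpr ⟨?_, hA⟩
            intro hq
            have hq1 : e.1 = s := congrArg Prod.fst hq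
            have hq2 : w = t := congrArg Prod.snd hq
            have := hmax' e heE
            rw [hq2] at h2
            omega
          · refine Finset.mem_erase.mpr ⟨?_, hB⟩
            intro hq
            have hq1 : w = s := congrArg Prod.fst hq
            have hq2 : e.2 = t := congrArg Prod.snd hq
            have := hmin' e heE hq2
            rw [hq1] at h1
            omega
        have hLEst : ∀ u ∈ V, ((s, u) ∈ E' ↔ κ s < κ u ∧ κ u < κ t) ∧
            ((u, t) ∈ E' ↔ κ s < κ u ∧ κ u < κ t) := by
          intro u hu
          constructor
          · constructor
            · intro hmem
              have heE := Finset.mem_of_mem_erase hmem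
              refine ⟨(hE _ heE).2.2, ?_⟩
              have hle := hmax' _ heE
              have hne : u ≠ t := by
                intro h
                rw [h] at hmem
                exact (Finset.notMem_erase _ _) hmem
              have : κ u ≠ κ t := fun h => hne (hκ h)
              simp only at hle this ⊢
              omega
            · rintro ⟨h1, h2⟩
              have := (hconv (s, t) hstE u hu h1 h2).1
              refine Finset.mem_erase.mpr ⟨?_, this⟩
              intro hq
              have : u = t := congrArg Prod.snd hq
              rw [this] at h2
              exact lt_irrefl _ h2
          · constructor
            · intro hmem
              have heE := Finset.mem_of_mem_erase hmem
              refine ⟨?_, (hE _ heE).2.2⟩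
              have hle := hmin' _ heE rfl
              have hne : u ≠ s := by
                intro h
                rw [h] at hmem
                exact (Finset.notMem_erase _ _) hmem
              have : κ u ≠ κ s := fun h => hne (hκ h)
              simp only at hle this ⊢
              omega
            · rintro ⟨h1, h2⟩
              have := (hconv (s, t) hstE u hu h1 h2).2
              refine Finset.mem_erase.mpr ⟨?_, this⟩
              intro hq
              have : u = s := congrArg Prod.fst hq
              rw [this] at h1
              exact lt_irrefl _ h1
        -- ascent splitting along the removed edge
        have hascsplit : ∀ W : Finset α,
            ascE E W = ascE E' W + (if s ∉ W ∧ t ∈ W then 1 else 0) := by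
          intro W
          unfold ascE
          rw [← Finset.insert_erase hstE, Finset.filter_insert]
          split_ifs with h
          · rw [Finset.card_insert_of_notMem
              (fun hc => (Finset.notMem_erase (s, t) E)
                (Finset.mem_of_mem_filter _ hc))]
          · rw [Nat.add_zero]
        -- the master counting identity
        have hkey : ∀ p' k', cnt V E ([] : List (α × α)) p' k'
              + cnt V E' [(s, t)] p' k'
            = cnt V E' ([] : List (α × α)) p' k'
              + (if k' = 0 then 0 else cnt V E' [(s, t)] p' (k' - 1)) := by
          intro p' k'
          have hsplitP : ∀ (F : Finset (α × α)) (kk : ℕ),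
              cnt V F ([] : List (α × α)) p' kk
              = ((V.powerset.filter (fun W => W.card = p' ∧ ascE F W = kk)).filter
                  (fun W => s ∉ W ∧ t ∈ W)).card
                + ((V.powerset.filter (fun W => W.card = p' ∧ ascE F W = kk)).filter
                  (fun W => ¬ (s ∉ W ∧ t ∈ W))).card := by
            intro F kk
            rw [Finset.card_filter_add_card_filter_not]
            unfold cnt cntSet
            congr 1
            apply Finset.filter_congr
            intro W hW
            simp
          have hMeq : ∀ kk, cnt V E' [(s, t)] p' kk
              = ((V.powerset.filter (fun W => W.card = p' ∧ ascE E' W = kk)).filter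
                  (fun W => s ∉ W ∧ t ∈ W)).card := by
            intro kk
            unfold cnt cntSet
            rw [Finset.filter_filter]
            congr 1
            apply Finset.filter_congr
            intro W hW
            simp only [List.mem_singleton, forall_eq]
            tauto
          have hR2 : ((V.powerset.filter (fun W => W.card = p' ∧ ascE E W = k')).filter
                  (fun W => ¬ (s ∉ W ∧ t ∈ W))).card
              = ((V.powerset.filter (fun W => W.card = p' ∧ ascE E' W = k')).filter
                  (fun W => ¬ (s ∉ W ∧ t ∈ W))).card := by
            congr 1
            rw [Finset.filter_filter, Finset.filter_filter]
            apply Finset.filter_congr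
            intro W hW
            have := hascsplit W
            constructor
            · rintro ⟨⟨h1, h2⟩, h3⟩
              rw [if_neg h3] at this
              exact ⟨⟨h1, by omega⟩, h3⟩
            · rintro ⟨⟨h1, h2⟩, h3⟩
              rw [if_neg h3] at this
              exact ⟨⟨h1, by omega⟩, h3⟩
          have hR1 : ((V.powerset.filter (fun W => W.card = p' ∧ ascE E W = k')).filter
                  (fun W => s ∉ W ∧ t ∈ W)).card
              = (if k' = 0 then 0 else
                  ((V.powerset.filter (fun W => W.card = p' ∧ ascE E' W = k' - 1)).filter
                    (fun W => s ∉ W ∧ t ∈ W)).card) := by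
            by_cases hk0 : k' = 0
            · subst hk0
              rw [if_pos rfl, Finset.card_eq_zero]
              apply Finset.eq_empty_of_forall_notMem
              intro W hW
              rcases Finset.mem_filter.mp hW with ⟨hW1, hP⟩
              rcases Finset.mem_filter.mp hW1 with ⟨-, -, hasc⟩
              have := hascsplit W
              rw [if_pos hP] at this
              omega
            · rw [if_neg hk0]
              congr 1
              rw [Finset.filter_filter, Finset.filter_filter]
              apply Finset.filter_congr
              intro W hW
              have := hascsplit W
              constructor
              · rintro ⟨⟨h1, h2⟩, h3⟩
                rw [if_pos h3] at this
                exact ⟨⟨h1, by omega⟩, h3⟩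
              · rintro ⟨⟨h1, h2⟩, h3⟩
                rw [if_pos h3] at this
                exact ⟨⟨h1, by omega⟩, h3⟩
          rw [hsplitP E k', hsplitP E' k', hMeq k', hR2, hR1]
          by_cases hk0 : k' = 0
          · rw [if_pos hk0, if_pos hk0]
            omega
          · rw [if_neg hk0, if_neg hk0, hMeq (k' - 1)]
            omega
        -- inductive hypotheses
        have hEcard : E'.card = E.card - 1 := Finset.card_erase_of_mem hstE
        have hE1 : 1 ≤ E.card := Finset.card_pos.mpr hEne
        have ihB : ∀ kk, cnt V E' ([] : List (α × α)) p kk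
            = cnt V E' ([] : List (α × α)) (V.card - p) kk := by
          intro kk
          exact ih V E' [] (by omega) hE' hconv'
            (by intro l hl; exact absurd hl (by simp))
            List.Pairwise.nil
            (by intro l hl; exact absurd hl (by simp)) p kk hp
        have ihM : ∀ kk, cnt V E' [(s, t)] p kk
            = cnt V E' [(s, t)] (V.card - p) kk := by
          intro kk
          exact ih V E' [(s, t)] (by omega) hE' hconv'
            (by
              intro l hl
              rw [List.mem_singleton.mp hl]
              exact ⟨hsV, htV, hκst⟩)
            (List.pairwise_singleton _ _)
            (by
              intro l hl
              rw [List.mem_singleton.mp hl]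
              exact hLEst) p kk hp
        have h1 := hkey p k
        have h2 := hkey (V.card - p) k
        have h3 := ihB k
        have h4 := ihM k
        by_cases hk0 : k = 0
        · rw [if_pos hk0] at h1 h2
          omega
        · rw [if_neg hk0] at h1 h2
          have h5 := ihM (k - 1)
          omega

end Core

section Arith

lemma keylt (n a b u v : ℕ) (hu : u < n) (hv : v < n) :
    n * a + u < n * b + v ↔ (a < b ∨ (a = b ∧ u < v)) := by
  constructor
  · intro h
    rcases lt_trichotomy a b with h' | h' | h'
    · exact Or.inl h'
    · subst h'
      exact Or.inr ⟨rfl, by omega⟩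
    · exfalso
      have : n * (b + 1) ≤ n * a := Nat.mul_le_mul_left n h'
      rw [Nat.mul_add, Nat.mul_one] at this
      omega
  · rintro (h | ⟨rfl, h⟩)
    · have : n * (a + 1) ≤ n * b := Nat.mul_le_mul_left n h
      rw [Nat.mul_add, Nat.mul_one] at this
      omega
    · omega

lemma keyeq (n a b u v : ℕ) (hu : u < n) (hv : v < n)
    (h : n * a + u = n * b + v) : u = v ∧ a = b := by
  have h1 : (n * a + u) % n = u := by
    rw [Nat.mul_add_mod, Nat.mod_eq_of_lt hu]
  have h2 : (n * b + v) % n = v := by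
    rw [Nat.mul_add_mod, Nat.mod_eq_of_lt hv]
  have huv : u = v := by rw [← h1, ← h2, h]
  refine ⟨huv, ?_⟩
  subst huv
  have hn : 0 < n := by omega
  have : n * a = n * b := by omega
  exact Nat.eq_of_mul_eq_mul_left hn this

lemma arith1 (m n i j li lj dx dy : ℕ) (hi : i < n) (hj : j < n) (hij : i < j)
    (hl : lj ≤ li) (hcol : lj = li → dx + m ≤ dy) :
    (if lj < li then ((m : ℤ) - |(dy : ℤ) - (dx : ℤ)|).toNat else 0)
      = (if (dy < dx ∨ (dx = dy ∧ li < lj))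
          then (if lj < li then ((m : ℤ) - |(dy : ℤ) - (dx : ℤ)|).toNat else 0)
          else (if lj < li then ((m : ℤ) - |(dx : ℤ) - (dy : ℤ) - 1|).toNat else 0))
        + (if n * dx + i < n * dy + j ∧ n * dy + j < n * dx + i + m * n
            then 1 else 0) := by
  have hk1 : (n * dx + i < n * dy + j) ↔ (dx < dy ∨ (dx = dy ∧ i < j)) :=
    keylt n dx dy i j hi hj
  have hring : n * dy + j < n * dx + i + m * n ↔ n * dy + j < n * (dx + m) + i := by
    constructor <;> intro h <;> [skip; skip] <;>
      (have : n * (dx + m) = n * dx + m * n := by ring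
       omega)
  have hk2 : (n * dy + j < n * dx + i + m * n) ↔ (dy < dx + m ∨ (dy = dx + m ∧ j < i)) := by
    rw [hring]
    exact keylt n dy (dx + m) j i hj hi
  simp only [hk1, hk2]
  rcases le_or_gt (dx : ℤ) (dy : ℤ) with hc | hc
  · rw [abs_of_nonneg (by omega : (0:ℤ) ≤ (dy : ℤ) - (dx : ℤ)),
      abs_of_neg (by omega : ((dx : ℤ) - (dy : ℤ) - 1) < 0)]
    have hcol' : lj = li → dx + m ≤ dy := hcol
    split_ifs <;> omega
  · rw [abs_of_neg (by omega : ((dy : ℤ) - (dx : ℤ)) < 0),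
      abs_of_nonneg (by omega : (0:ℤ) ≤ (dx : ℤ) - (dy : ℤ) - 1)]
    split_ifs <;> omega

lemma arith2 (m n i j li lj dx dy : ℕ) (hi : i < n) (hj : j < n) (hij : i < j)
    (hl : lj ≤ li) (hcol : lj = li → dx + m ≤ dy) :
    (if lj < li then ((m : ℤ) - |(dx : ℤ) - (dy : ℤ) - 1|).toNat else 0)
      = (if (dy < dx ∨ (dx = dy ∧ li < lj))
          then (if lj < li then ((m : ℤ) - |(dy : ℤ) - (dx : ℤ)|).toNat else 0)
          else (if lj < li then ((m : ℤ) - |(dx : ℤ) - (dy : ℤ) - 1|).toNat else 0))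
        + (if n * dy + j < n * dx + i ∧ n * dx + i < n * dy + j + m * n
            then 1 else 0) := by
  have hk1 : (n * dy + j < n * dx + i) ↔ (dy < dx ∨ (dy = dx ∧ j < i)) :=
    keylt n dy dx j i hj hi
  have hring : n * dx + i < n * dy + j + m * n ↔ n * dx + i < n * (dy + m) + j := by
    constructor <;> intro h <;> [skip; skip] <;>
      (have : n * (dy + m) = n * dy + m * n := by ring
       omega)
  have hk2 : (n * dx + i < n * dy + j + m * n) ↔ (dx < dy + m ∨ (dx = dy + m ∧ i < j)) := by
    rw [hring]
    exact keylt n dx (dy + m) i j hi hj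
  simp only [hk1, hk2]
  rcases le_or_gt (dx : ℤ) (dy : ℤ) with hc | hc
  · rw [abs_of_nonneg (by omega : (0:ℤ) ≤ (dy : ℤ) - (dx : ℤ)),
      abs_of_neg (by omega : ((dx : ℤ) - (dy : ℤ) - 1) < 0)]
    have hcol' : lj = li → dx + m ≤ dy := hcol
    split_ifs <;> omega
  · rw [abs_of_neg (by omega : ((dy : ℤ) - (dx : ℤ)) < 0),
      abs_of_nonneg (by omega : (0:ℤ) ≤ (dx : ℤ) - (dy : ℤ) - 1)]
    split_ifs <;> omega

end Arith

section Appl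

/-- the scaled diagonal key of a cell. -/
def key (m : ℕ) {n : ℕ} (lam : Fin n → ℕ) (i : Fin n) : ℕ :=
  n * (m * (i : ℕ) + lam i) + (i : ℕ)

/-- skeleton: identify the letters `B` and `B+1`. -/
def skel (B : ℕ) {n : ℕ} (T : Fin n → ℕ) : Fin n → ℕ :=
  fun i => if T i = B + 1 then B else T i

def Wof (B : ℕ) {n : ℕ} (T : Fin n → ℕ) : Finset (Fin n) :=
  Finset.univ.filter (fun i => T i = B + 1)

def Vof (B : ℕ) {n : ℕ} (σ : Fin n → ℕ) : Finset (Fin n) :=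
  Finset.univ.filter (fun i => σ i = B)

def Eof (m : ℕ) {n : ℕ} (lam : Fin n → ℕ) (B : ℕ) (σ : Fin n → ℕ) :
    Finset (Fin n × Fin n) :=
  (Finset.univ ×ˢ Finset.univ).filter (fun e =>
    σ e.1 = B ∧ σ e.2 = B ∧ key m lam e.1 < key m lam e.2 ∧
    key m lam e.2 < key m lam e.1 + m * n)

def Lof (m : ℕ) {n : ℕ} (lam : Fin n → ℕ) (B : ℕ) (σ : Fin n → ℕ) :
    List (Fin n × Fin n) :=
  (List.finRange n).filterMap (fun (i : Fin n) =>
    if h : (i : ℕ) + 1 < n then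
      (if lam i = lam ⟨(i : ℕ) + 1, h⟩ ∧ σ i = B ∧ σ ⟨(i : ℕ) + 1, h⟩ = B
        then some (i, ⟨(i : ℕ) + 1, h⟩) else none)
    else none)

def unsk (B : ℕ) {n : ℕ} (σ : Fin n → ℕ) (W : Finset (Fin n)) : Fin n → ℕ :=
  fun i => if σ i = B then (if i ∈ W then B + 1 else B) else σ i

lemma key_inj (m : ℕ) {n : ℕ} (lam : Fin n → ℕ) :
    Function.Injective (key m lam) := by
  intro i j h
  have := keyeq n (m * (i : ℕ) + lam i) (m * (j : ℕ) + lam j) i j i.isLt j.isLt h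
  exact Fin.ext this.1

lemma mem_Eof {m : ℕ} {n : ℕ} {lam : Fin n → ℕ} {B : ℕ} {σ : Fin n → ℕ}
    {e : Fin n × Fin n} :
    e ∈ Eof m lam B σ ↔ σ e.1 = B ∧ σ e.2 = B ∧
      key m lam e.1 < key m lam e.2 ∧ key m lam e.2 < key m lam e.1 + m * n := by
  unfold Eof
  simp [Finset.mem_filter]

lemma mem_Lof {m : ℕ} {n : ℕ} {lam : Fin n → ℕ} {B : ℕ} {σ : Fin n → ℕ}
    {l : Fin n × Fin n} :
    l ∈ Lof m lam B σ ↔ ((l.2 : ℕ) = (l.1 : ℕ) + 1 ∧ lam l.1 = lam l.2 ∧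
      σ l.1 = B ∧ σ l.2 = B) := by
  unfold Lof
  rw [List.mem_filterMap]
  constructor
  · rintro ⟨a, ha, hfa⟩
    by_cases h : (a : ℕ) + 1 < n
    · rw [dif_pos h] at hfa
      by_cases h2 : lam a = lam ⟨(a : ℕ) + 1, h⟩ ∧ σ a = B ∧ σ ⟨(a : ℕ) + 1, h⟩ = B
      · rw [if_pos h2] at hfa
        have := Option.some.inj hfa
        rw [← this]
        exact ⟨rfl, h2.1, h2.2.1, h2.2.2⟩
      · rw [if_neg h2] at hfa
        exact absurd hfa (by simp)
    · rw [dif_neg h] at hfa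
      exact absurd hfa (by simp)
  · rintro ⟨h1, h2, h3, h4⟩
    refine ⟨l.1, List.mem_finRange _, ?_⟩
    have h : (l.1 : ℕ) + 1 < n := by
      rw [← h1]; exact l.2.isLt
    rw [dif_pos h]
    have hl2 : (⟨(l.1 : ℕ) + 1, h⟩ : Fin n) = l.2 := by
      apply Fin.ext
      simp [h1]
    rw [hl2, if_pos ⟨h2, h3, h4⟩]

lemma lock_key {m : ℕ} {n : ℕ} {lam : Fin n → ℕ} {B : ℕ} {σ : Fin n → ℕ}
    {l : Fin n × Fin n} (hl : l ∈ Lof m lam B σ) :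
    key m lam l.2 = key m lam l.1 + (m * n + 1) := by
  rcases mem_Lof.mp hl with ⟨h1, h2, -, -⟩
  unfold key
  rw [h1, ← h2]
  ring

lemma Eof_hE {m : ℕ} {n : ℕ} {lam : Fin n → ℕ} {B : ℕ} {σ : Fin n → ℕ} :
    ∀ e ∈ Eof m lam B σ, e.1 ∈ Vof B σ ∧ e.2 ∈ Vof B σ ∧
      key m lam e.1 < key m lam e.2 := by
  intro e he
  rcases mem_Eof.mp he with ⟨h1, h2, h3, -⟩
  exact ⟨Finset.mem_filter.mpr ⟨Finset.mem_univ _, h1⟩,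
    Finset.mem_filter.mpr ⟨Finset.mem_univ _, h2⟩, h3⟩

lemma Eof_hconv {m : ℕ} {n : ℕ} {lam : Fin n → ℕ} {B : ℕ} {σ : Fin n → ℕ} :
    ∀ e ∈ Eof m lam B σ, ∀ w ∈ Vof B σ,
      key m lam e.1 < key m lam w → key m lam w < key m lam e.2 →
      (e.1, w) ∈ Eof m lam B σ ∧ (w, e.2) ∈ Eof m lam B σ := by
  intro e he w hw h1 h2
  rcases mem_Eof.mp he with ⟨he1, he2, he3, he4⟩
  have hwB : σ w = B := (Finset.mem_filter.mp hw).2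
  constructor
  · exact mem_Eof.mpr ⟨he1, hwB, h1, lt_trans h2 he4⟩
  · exact mem_Eof.mpr ⟨hwB, he2, h2, lt_trans he4 (Nat.add_lt_add_right h1 _)⟩

lemma Lof_hLV {m : ℕ} {n : ℕ} {lam : Fin n → ℕ} {B : ℕ} {σ : Fin n → ℕ}
    (hm : 1 ≤ m) :
    ∀ l ∈ Lof m lam B σ, l.1 ∈ Vof B σ ∧ l.2 ∈ Vof B σ ∧
      key m lam l.1 < key m lam l.2 := by
  intro l hl
  rcases mem_Lof.mp hl with ⟨h1, h2, h3, h4⟩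
  have := lock_key hl
  have hn : 0 < n := l.1.pos
  refine ⟨Finset.mem_filter.mpr ⟨Finset.mem_univ _, h3⟩,
    Finset.mem_filter.mpr ⟨Finset.mem_univ _, h4⟩, ?_⟩
  have : 1 ≤ m * n := Nat.mul_pos hm hn
  omega

lemma Lof_hLE {m : ℕ} {n : ℕ} {lam : Fin n → ℕ} {B : ℕ} {σ : Fin n → ℕ}
    (hm : 1 ≤ m) :
    ∀ l ∈ Lof m lam B σ, ∀ u ∈ Vof B σ,
      ((l.1, u) ∈ Eof m lam B σ ↔
        key m lam l.1 < key m lam u ∧ key m lam u < key m lam l.2) ∧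
      ((u, l.2) ∈ Eof m lam B σ ↔
        key m lam l.1 < key m lam u ∧ key m lam u < key m lam l.2) := by
  intro l hl u hu
  rcases mem_Lof.mp hl with ⟨h1, h2, h3, h4⟩
  have hkey := lock_key hl
  have huB : σ u = B := (Finset.mem_filter.mp hu).2
  have hn : 0 < n := u.pos
  have hmn : 1 ≤ m * n := Nat.mul_pos hm hn
  have hne1 : key m lam u ≠ key m lam l.1 + m * n := by
    intro h
    have h' : n * (m * (u : ℕ) + lam u) + (u : ℕ)
        = n * (m * (l.1 : ℕ) + lam l.1) + (l.1 : ℕ) + m * n := h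
    have heq : n * (m * (u : ℕ) + lam u) + (u : ℕ)
        = n * ((m * (l.1 : ℕ) + lam l.1) + m) + (l.1 : ℕ) := by
      have hr : n * ((m * (l.1 : ℕ) + lam l.1) + m)
          = n * (m * (l.1 : ℕ) + lam l.1) + m * n := by ring
      omega
    have h2 := keyeq n _ _ _ _ u.isLt l.1.isLt heq
    have hu1 : u = l.1 := Fin.ext h2.1
    rw [hu1] at h
    omega
  have hne2 : key m lam u ≠ key m lam l.1 + 1 := by
    intro h
    have hl2n : (l.1 : ℕ) + 1 < n := by rw [← h1]; exact l.2.isLt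
    have h' : n * (m * (u : ℕ) + lam u) + (u : ℕ)
        = n * (m * (l.1 : ℕ) + lam l.1) + (l.1 : ℕ) + 1 := h
    have heq : n * (m * (u : ℕ) + lam u) + (u : ℕ)
        = n * (m * (l.1 : ℕ) + lam l.1) + ((l.1 : ℕ) + 1) := by omega
    have h2 := keyeq n _ _ _ ((l.1 : ℕ) + 1) u.isLt hl2n heq
    have hu2 : u = l.2 := Fin.ext (by rw [h2.1, h1])
    rw [hu2] at h
    omega
  constructor
  · constructor
    · intro hmem
      have h0 := mem_Eof.mp hmem
      dsimp only at h0
      rcases h0 with ⟨-, -, ha, hb⟩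
      exact ⟨ha, by omega⟩
    · rintro ⟨ha, hb⟩
      refine mem_Eof.mpr ?_
      dsimp only
      exact ⟨h3, huB, ha, by omega⟩
  · constructor
    · intro hmem
      have h0 := mem_Eof.mp hmem
      dsimp only at h0
      rcases h0 with ⟨-, -, ha, hb⟩
      exact ⟨by omega, ha⟩
    · rintro ⟨ha, hb⟩
      refine mem_Eof.mpr ?_
      dsimp only
      exact ⟨huB, h4, hb, by omega⟩

lemma pairwise_filterMap {β γ : Type*} (f : β → Option γ) {R : β → β → Prop}
    {R' : γ → γ → Prop} :
    ∀ (l : List β), l.Pairwise R →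
      (∀ a b c d, R a b → f a = some c → f b = some d → R' c d) →
      (l.filterMap f).Pairwise R' := by
  intro l
  induction l with
  | nil => intro _ _; simp
  | cons a l ihl =>
    intro hpw hf
    rw [List.filterMap_cons]
    rcases List.pairwise_cons.mp hpw with ⟨ha, hl⟩
    cases hfa : f a with
    | none => exact ihl hl hf
    | some c =>
      rw [List.pairwise_cons]
      refine ⟨?_, ihl hl hf⟩
      intro d hd
      rcases List.mem_filterMap.mp hd with ⟨b, hb, hfb⟩
      exact hf a b c d (ha b hb) hfa hfb

lemma skel_mem_iff {B : ℕ} {n : ℕ} {T : Fin n → ℕ} {i : Fin n} :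
    skel B T i = B ↔ (T i = B ∨ T i = B + 1) := by
  unfold skel
  by_cases h : T i = B + 1
  · rw [if_pos h]; exact ⟨fun _ => Or.inr h, fun _ => rfl⟩
  · rw [if_neg h]
    constructor
    · intro h'; exact Or.inl h'
    · rintro (h' | h')
      · exact h'
      · exact absurd h' h

lemma Lof_pairwise {m : ℕ} {n : ℕ} {lam : Fin n → ℕ} {B : ℕ} {T : Fin n → ℕ}
    (hT : IsSSYT lam T) :
    List.Pairwise (fun l l' : Fin n × Fin n =>
      l.1 ≠ l'.1 ∧ l.1 ≠ l'.2 ∧ l.2 ≠ l'.1 ∧ l.2 ≠ l'.2)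
      (Lof m lam B (skel B T)) := by
  unfold Lof
  apply pairwise_filterMap _ _ (List.pairwise_lt_finRange n)
  intro a b c d hab hfa hfb
  by_cases ha : (a : ℕ) + 1 < n
  swap
  · rw [dif_neg ha] at hfa; exact absurd hfa (by simp)
  by_cases hb : (b : ℕ) + 1 < n
  swap
  · rw [dif_neg hb] at hfb; exact absurd hfb (by simp)
  rw [dif_pos ha] at hfa
  rw [dif_pos hb] at hfb
  by_cases ha2 : lam a = lam ⟨(a : ℕ) + 1, ha⟩ ∧ skel B T a = B ∧
      skel B T ⟨(a : ℕ) + 1, ha⟩ = B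
  swap
  · rw [if_neg ha2] at hfa; exact absurd hfa (by simp)
  by_cases hb2 : lam b = lam ⟨(b : ℕ) + 1, hb⟩ ∧ skel B T b = B ∧
      skel B T ⟨(b : ℕ) + 1, hb⟩ = B
  swap
  · rw [if_neg hb2] at hfb; exact absurd hfb (by simp)
  rw [if_pos ha2] at hfa
  rw [if_pos hb2] at hfb
  rw [← Option.some.inj hfa, ← Option.some.inj hfb]
  have hablt : (a : ℕ) < (b : ℕ) := hab
  have hchain : (a : ℕ) + 1 ≠ (b : ℕ) := by
    intro hc
    -- three consecutive cells in the same column, all with skeleton B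
    have hcol1 : SameCol lam a ⟨(a : ℕ) + 1, ha⟩ := ⟨rfl, ha2.1⟩
    have hcol2 : SameCol lam b ⟨(b : ℕ) + 1, hb⟩ := ⟨rfl, hb2.1⟩
    have h1 := hT.2 a ⟨(a : ℕ) + 1, ha⟩ hcol1
    have h2 := hT.2 b ⟨(b : ℕ) + 1, hb⟩ hcol2
    have hba : (⟨(a : ℕ) + 1, ha⟩ : Fin n) = b := Fin.ext hc
    rw [hba] at h1
    have hv1 := skel_mem_iff.mp ha2.2.1
    have hv2 := skel_mem_iff.mp hb2.2.1
    have hv3 := skel_mem_iff.mp hb2.2.2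
    omega
  refine ⟨fun h => ?_, fun h => ?_, fun h => ?_, fun h => ?_⟩ <;>
    (have hv := congrArg Fin.val h; dsimp only at hv; omega)

end Appl



section Decomp

/-- the summand of `dinvm`. -/
noncomputable def summand (m : ℕ) {n : ℕ} (lam : Fin n → ℕ) (T : Fin n → ℕ)
    (p : Fin n × Fin n) : ℕ :=
  if T p.1 < T p.2 then contrib m (cell lam p.1) (cell lam p.2)
  else if T p.1 = T p.2 ∧ p.1 < p.2 then
    (if dLess m (cell lam p.1) (cell lam p.2) then
      contrib m (cell lam p.1) (cell lam p.2)
    else contrib m (cell lam p.2) (cell lam p.1))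
  else 0

lemma dinvm_eq_sum (m : ℕ) {n : ℕ} (lam : Fin n → ℕ) (T : Fin n → ℕ) :
    dinvm m lam T = ∑ p : Fin n × Fin n, summand m lam T p := rfl

noncomputable def indp (m : ℕ) {n : ℕ} (lam : Fin n → ℕ) (B : ℕ) (σ : Fin n → ℕ)
    (W : Finset (Fin n)) (p : Fin n × Fin n) : ℕ :=
  if (p ∈ Eof m lam B σ ∧ p.1 ∉ W ∧ p.2 ∈ W) then 1 else 0

lemma summand_eval (m : ℕ) {n : ℕ} (lam : Fin n → ℕ) (T : Fin n → ℕ) (i j : Fin n) :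
    summand m lam T (i, j) = if T i < T j then contrib m (cell lam i) (cell lam j)
      else if T i = T j ∧ i < j then
        (if dLess m (cell lam i) (cell lam j) then contrib m (cell lam i) (cell lam j)
        else contrib m (cell lam j) (cell lam i))
      else 0 := rfl

lemma indp_eval (m : ℕ) {n : ℕ} (lam : Fin n → ℕ) (B : ℕ) (σ : Fin n → ℕ)
    (W : Finset (Fin n)) (i j : Fin n) :
    indp m lam B σ W (i, j)
      = if ((i, j) ∈ Eof m lam B σ ∧ i ∉ W ∧ j ∈ W) then 1 else 0 := rfl

lemma sum_pair_split {n : ℕ} (f : Fin n × Fin n → ℕ) (hdiag : ∀ i, f (i, i) = 0) :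
    ∑ p : Fin n × Fin n, f p
      = ∑ p ∈ Finset.univ.filter (fun p : Fin n × Fin n => p.1 < p.2),
          (f p + f (p.2, p.1)) := by
  classical
  rw [Finset.sum_add_distrib]
  have h0 : ∑ p : Fin n × Fin n, f p
      = ∑ p ∈ Finset.univ.filter (fun p : Fin n × Fin n => p.1 < p.2), f p
        + ∑ p ∈ Finset.univ.filter (fun p : Fin n × Fin n => ¬ p.1 < p.2), f p :=
    (Finset.sum_filter_add_sum_filter_not _ _ _).symm
  rw [h0]
  congr 1
  have h1 : ∑ p ∈ Finset.univ.filter (fun p : Fin n × Fin n => ¬ p.1 < p.2), f p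
      = ∑ p ∈ (Finset.univ.filter (fun p : Fin n × Fin n => ¬ p.1 < p.2)).filter
          (fun p => p.2 < p.1), f p
        + ∑ p ∈ (Finset.univ.filter (fun p : Fin n × Fin n => ¬ p.1 < p.2)).filter
          (fun p => ¬ p.2 < p.1), f p :=
    (Finset.sum_filter_add_sum_filter_not _ _ _).symm
  rw [h1]
  have h2 : ∑ p ∈ (Finset.univ.filter (fun p : Fin n × Fin n => ¬ p.1 < p.2)).filter
      (fun p => ¬ p.2 < p.1), f p = 0 := by
    apply Finset.sum_eq_zero
    intro p hp
    rcases Finset.mem_filter.mp hp with ⟨hp1, hp2⟩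
    rcases Finset.mem_filter.mp hp1 with ⟨-, hp3⟩
    have : p.2 = p.1 := le_antisymm (not_lt.mp hp3) (not_lt.mp hp2)
    have hpp : p = (p.1, p.1) := by
      rw [Prod.ext_iff]
      exact ⟨rfl, this⟩
    rw [hpp]
    exact hdiag p.1
  rw [h2, add_zero]
  -- now the swap bijection
  rw [Finset.filter_filter]
  have hseteq : Finset.univ.filter (fun p : Fin n × Fin n => ¬ p.1 < p.2 ∧ p.2 < p.1)
      = Finset.univ.filter (fun p : Fin n × Fin n => p.2 < p.1) := by
    apply Finset.filter_congr
    intro p _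
    constructor
    · exact fun h => h.2
    · exact fun h => ⟨not_lt.mpr (le_of_lt h), h⟩
  rw [hseteq]
  apply Finset.sum_nbij' (i := fun p : Fin n × Fin n => (p.2, p.1))
    (j := fun p : Fin n × Fin n => (p.2, p.1))
  · intro a ha
    rcases Finset.mem_filter.mp ha with ⟨-, h⟩
    exact Finset.mem_filter.mpr ⟨Finset.mem_univ _, h⟩
  · intro a ha
    rcases Finset.mem_filter.mp ha with ⟨-, h⟩
    exact Finset.mem_filter.mpr ⟨Finset.mem_univ _, h⟩
  · intro a _; rfl
  · intro a _; rfl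
  · intro a _; rfl

lemma asc_as_sum (m : ℕ) {n : ℕ} (lam : Fin n → ℕ) (B : ℕ) (σ : Fin n → ℕ)
    (W : Finset (Fin n)) :
    ascE (Eof m lam B σ) W = ∑ p : Fin n × Fin n, indp m lam B σ W p := by
  classical
  unfold ascE
  rw [Finset.card_filter]
  have h1 : ∀ e ∈ Eof m lam B σ,
      (if e.1 ∉ W ∧ e.2 ∈ W then 1 else 0) = indp m lam B σ W e := by
    intro e he
    unfold indp
    by_cases h : e.1 ∉ W ∧ e.2 ∈ W
    · rw [if_pos h, if_pos ⟨he, h⟩]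
    · rw [if_neg h, if_neg (fun hh => h hh.2)]
  rw [Finset.sum_congr rfl h1]
  apply Finset.sum_subset (Finset.subset_univ _)
  intro e _ hne
  unfold indp
  rw [if_neg (fun hh => hne hh.1)]

lemma skel_order {B : ℕ} {n : ℕ} {T : Fin n → ℕ} {i j : Fin n}
    (h : ¬ (skel B T i = B ∧ skel B T j = B)) :
    (T i < T j ↔ skel B T i < skel B T j) ∧ (T i = T j ↔ skel B T i = skel B T j) := by
  have e1 : skel B T i = if T i = B + 1 then B else T i := rfl
  have e2 : skel B T j = if T j = B + 1 then B else T j := rfl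
  by_cases hi : T i = B + 1
  · rw [if_pos hi] at e1
    by_cases hj : T j = B + 1
    · rw [if_pos hj] at e2
      exact absurd ⟨e1, e2⟩ h
    · rw [if_neg hj] at e2
      have hTj : T j ≠ B := fun hh => h ⟨e1, by rw [e2, hh]⟩
      omega
  · rw [if_neg hi] at e1
    by_cases hj : T j = B + 1
    · rw [if_pos hj] at e2
      have hTi : T i ≠ B := fun hh => h ⟨by rw [e1, hh], e2⟩
      omega
    · rw [if_neg hj] at e2
      omega

lemma skel_eq_of_eq {B : ℕ} {n : ℕ} {T : Fin n → ℕ} {i j : Fin n}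
    (h : T i = T j) : skel B T i = skel B T j := by
  unfold skel
  rw [h]

lemma mem_Wof {B : ℕ} {n : ℕ} {T : Fin n → ℕ} {i : Fin n} :
    i ∈ Wof B T ↔ T i = B + 1 := by
  unfold Wof
  simp

end Decomp


section PairId

variable {m n : ℕ} {lam : Fin n → ℕ} {B : ℕ} {T : Fin n → ℕ}

lemma contrib_eval1 (m : ℕ) {n : ℕ} (lam : Fin n → ℕ) (i j : Fin n)
    (hlj : lam j ≤ lam i) :
    contrib m (cell lam i) (cell lam j)
      = if lam j < lam i then
          ((m : ℤ) - |((m * (j : ℕ) + lam j : ℕ) : ℤ) - ((m * (i : ℕ) + lam i : ℕ) : ℤ)|).toNat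
        else 0 := by
  unfold contrib cell dm
  dsimp only
  by_cases h : lam j < lam i
  · rw [if_pos h, if_pos h]
  · rw [if_neg h, if_neg h, if_neg (by omega : ¬ lam i < lam j)]

lemma contrib_eval2 (m : ℕ) {n : ℕ} (lam : Fin n → ℕ) (i j : Fin n)
    (hlj : lam j ≤ lam i) :
    contrib m (cell lam j) (cell lam i)
      = if lam j < lam i then
          ((m : ℤ) - |((m * (i : ℕ) + lam i : ℕ) : ℤ) - ((m * (j : ℕ) + lam j : ℕ) : ℤ) - 1|).toNat
        else 0 := by
  unfold contrib cell dm
  dsimp only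
  rw [if_neg (by omega : ¬ lam i < lam j)]

lemma dLess_eval (m : ℕ) {n : ℕ} (lam : Fin n → ℕ) (i j : Fin n) :
    dLess m (cell lam i) (cell lam j)
      = ((m * (j : ℕ) + lam j < m * (i : ℕ) + lam i)
        ∨ (m * (i : ℕ) + lam i = m * (j : ℕ) + lam j ∧ lam i < lam j)) := rfl

lemma eterm_eval (m : ℕ) {n : ℕ} (lam : Fin n → ℕ) (i j : Fin n)
    (hlj : lam j ≤ lam i) :
    (if dLess m (cell lam i) (cell lam j) then contrib m (cell lam i) (cell lam j)
      else contrib m (cell lam j) (cell lam i))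
    = (if ((m * (j : ℕ) + lam j < m * (i : ℕ) + lam i)
          ∨ (m * (i : ℕ) + lam i = m * (j : ℕ) + lam j ∧ lam i < lam j)) then
        (if lam j < lam i then
          ((m : ℤ) - |((m * (j : ℕ) + lam j : ℕ) : ℤ) - ((m * (i : ℕ) + lam i : ℕ) : ℤ)|).toNat
        else 0)
      else
        (if lam j < lam i then
          ((m : ℤ) - |((m * (i : ℕ) + lam i : ℕ) : ℤ) - ((m * (j : ℕ) + lam j : ℕ) : ℤ) - 1|).toNat
        else 0)) := by
  rw [contrib_eval1 m lam i j hlj, contrib_eval2 m lam i j hlj, dLess_eval]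
  congr

lemma hcol_aux (m : ℕ) {n : ℕ} (lam : Fin n → ℕ) (i j : Fin n)
    (hij : (i : ℕ) < (j : ℕ)) :
    lam j = lam i → (m * (i : ℕ) + lam i) + m ≤ m * (j : ℕ) + lam j := by
  intro h
  have h2 : (i : ℕ) + 1 ≤ (j : ℕ) := hij
  have h3 : m * ((i : ℕ) + 1) ≤ m * (j : ℕ) := Nat.mul_le_mul_left m h2
  have h4 : m * ((i : ℕ) + 1) = m * (i : ℕ) + m := Nat.mul_succ m (i : ℕ)
  omega

lemma pair_identity (m : ℕ) {n : ℕ} (lam : Fin n → ℕ) (B : ℕ) (T : Fin n → ℕ)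
    (hlam1 : ∀ i j : Fin n, i ≤ j → lam j ≤ lam i)
    (i j : Fin n) (hij : i < j) :
    summand m lam T (i, j) + summand m lam T (j, i)
      = summand m lam (skel B T) (i, j) + summand m lam (skel B T) (j, i)
        + (indp m lam B (skel B T) (Wof B T) (i, j)
          + indp m lam B (skel B T) (Wof B T) (j, i)) := by
  classical
  set σ := skel B T with hσdef
  have hlj : lam j ≤ lam i := hlam1 i j (le_of_lt hij)
  have hji : ¬ (j < i) := not_lt.mpr (le_of_lt hij)
  have hij' : (i : ℕ) < (j : ℕ) := hij
  rcases lt_trichotomy (T i) (T j) with hlt | heq | hgt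
  · -- T i < T j
    have hs1 : summand m lam T (i, j) = contrib m (cell lam i) (cell lam j) := by
      rw [summand_eval, if_pos hlt]
    have hs2 : summand m lam T (j, i) = 0 := by
      rw [summand_eval, if_neg (by omega : ¬ T j < T i),
        if_neg (fun hh => hji hh.2)]
    by_cases hS : σ i = B ∧ σ j = B
    · have hTi := skel_mem_iff.mp hS.1
      have hTj := skel_mem_iff.mp hS.2
      have hTiB : T i = B := by omega
      have hTjB : T j = B + 1 := by omega
      have hiW : i ∉ Wof B T := fun hh => by
        have := mem_Wof.mp hh; omega
      have hjW : j ∈ Wof B T := mem_Wof.mpr hTjB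
      have hσs1 : summand m lam σ (i, j)
          = (if dLess m (cell lam i) (cell lam j) then contrib m (cell lam i) (cell lam j)
            else contrib m (cell lam j) (cell lam i)) := by
        rw [summand_eval, if_neg (by rw [hS.1, hS.2]; exact lt_irrefl B),
          if_pos ⟨by rw [hS.1, hS.2], hij⟩]
      have hσs2 : summand m lam σ (j, i) = 0 := by
        rw [summand_eval, if_neg (by rw [hS.1, hS.2]; exact lt_irrefl B),
          if_neg (fun hh => hji hh.2)]
      have hind1 : indp m lam B σ (Wof B T) (i, j)
          = if (n * (m * (i : ℕ) + lam i) + (i : ℕ) < n * (m * (j : ℕ) + lam j) + (j : ℕ)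
              ∧ n * (m * (j : ℕ) + lam j) + (j : ℕ)
                < n * (m * (i : ℕ) + lam i) + (i : ℕ) + m * n)
              then 1 else 0 := by
        rw [indp_eval]
        by_cases hk : n * (m * (i : ℕ) + lam i) + (i : ℕ)
              < n * (m * (j : ℕ) + lam j) + (j : ℕ)
            ∧ n * (m * (j : ℕ) + lam j) + (j : ℕ)
              < n * (m * (i : ℕ) + lam i) + (i : ℕ) + m * n
        · rw [if_pos ⟨mem_Eof.mpr ⟨hS.1, hS.2, hk.1, hk.2⟩, hiW, hjW⟩, if_pos hk]
        · rw [if_neg ?_, if_neg hk]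
          rintro ⟨hmem, -, -⟩
          have h0 := mem_Eof.mp hmem
          dsimp only at h0
          exact hk ⟨h0.2.2.1, h0.2.2.2⟩
      have hind2 : indp m lam B σ (Wof B T) (j, i) = 0 := by
        rw [indp_eval, if_neg (fun hh => hh.2.1 hjW)]
      rw [hs1, hs2, hσs1, hσs2, hind1, hind2, eterm_eval m lam i j hlj,
        contrib_eval1 m lam i j hlj]
      have harith := arith1 m n (i : ℕ) (j : ℕ) (lam i) (lam j)
        (m * (i : ℕ) + lam i) (m * (j : ℕ) + lam j) i.isLt j.isLt hij' hlj
        (hcol_aux m lam i j hij')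
      simp only [add_zero]
      exact harith
    · have horder := skel_order (B := B) hS
      have hσlt : σ i < σ j := horder.1.mp hlt
      have hσs1 : summand m lam σ (i, j) = contrib m (cell lam i) (cell lam j) := by
        rw [summand_eval, if_pos hσlt]
      have hσs2 : summand m lam σ (j, i) = 0 := by
        rw [summand_eval, if_neg (by omega : ¬ σ j < σ i),
          if_neg (fun hh => hji hh.2)]
      have hind1 : indp m lam B σ (Wof B T) (i, j) = 0 := by
        rw [indp_eval]
        apply if_neg
        rintro ⟨hmem, -, -⟩
        have h0 := mem_Eof.mp hmem
        exact hS ⟨h0.1, h0.2.1⟩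
      have hind2 : indp m lam B σ (Wof B T) (j, i) = 0 := by
        rw [indp_eval]
        apply if_neg
        rintro ⟨hmem, -, -⟩
        have h0 := mem_Eof.mp hmem
        exact hS ⟨h0.2.1, h0.1⟩
      rw [hs1, hs2, hσs1, hσs2, hind1, hind2]
  · -- T i = T j
    have hσeq : σ i = σ j := skel_eq_of_eq heq
    have hs1 : summand m lam T (i, j)
        = (if dLess m (cell lam i) (cell lam j) then contrib m (cell lam i) (cell lam j)
          else contrib m (cell lam j) (cell lam i)) := by
      rw [summand_eval, if_neg (by omega : ¬ T i < T j), if_pos ⟨heq, hij⟩]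
    have hs2 : summand m lam T (j, i) = 0 := by
      rw [summand_eval, if_neg (by omega : ¬ T j < T i), if_neg (fun hh => hji hh.2)]
    have hσs1 : summand m lam σ (i, j)
        = (if dLess m (cell lam i) (cell lam j) then contrib m (cell lam i) (cell lam j)
          else contrib m (cell lam j) (cell lam i)) := by
      rw [summand_eval, if_neg (by omega : ¬ σ i < σ j), if_pos ⟨hσeq, hij⟩]
    have hσs2 : summand m lam σ (j, i) = 0 := by
      rw [summand_eval, if_neg (by omega : ¬ σ j < σ i), if_neg (fun hh => hji hh.2)]
    have hWiff : i ∈ Wof B T ↔ j ∈ Wof B T := by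
      rw [mem_Wof, mem_Wof, heq]
    have hind1 : indp m lam B σ (Wof B T) (i, j) = 0 := by
      rw [indp_eval, if_neg (fun hh => hh.2.1 (hWiff.mpr hh.2.2))]
    have hind2 : indp m lam B σ (Wof B T) (j, i) = 0 := by
      rw [indp_eval, if_neg (fun hh => hh.2.1 (hWiff.mp hh.2.2))]
    rw [hs1, hs2, hσs1, hσs2, hind1, hind2]
  · -- T j < T i
    have hs1 : summand m lam T (i, j) = 0 := by
      rw [summand_eval, if_neg (by omega : ¬ T i < T j),
        if_neg (fun hh => by omega)]
    have hs2 : summand m lam T (j, i) = contrib m (cell lam j) (cell lam i) := by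
      rw [summand_eval, if_pos hgt]
    by_cases hS : σ i = B ∧ σ j = B
    · have hTi := skel_mem_iff.mp hS.1
      have hTj := skel_mem_iff.mp hS.2
      have hTiB : T i = B + 1 := by omega
      have hTjB : T j = B := by omega
      have hiW : i ∈ Wof B T := mem_Wof.mpr hTiB
      have hjW : j ∉ Wof B T := fun hh => by
        have := mem_Wof.mp hh; omega
      have hσs1 : summand m lam σ (i, j)
          = (if dLess m (cell lam i) (cell lam j) then contrib m (cell lam i) (cell lam j)
            else contrib m (cell lam j) (cell lam i)) := by
        rw [summand_eval, if_neg (by rw [hS.1, hS.2]; exact lt_irrefl B),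
          if_pos ⟨by rw [hS.1, hS.2], hij⟩]
      have hσs2 : summand m lam σ (j, i) = 0 := by
        rw [summand_eval, if_neg (by rw [hS.1, hS.2]; exact lt_irrefl B),
          if_neg (fun hh => hji hh.2)]
      have hind1 : indp m lam B σ (Wof B T) (i, j) = 0 := by
        rw [indp_eval, if_neg (fun hh => hh.2.1 hiW)]
      have hind2 : indp m lam B σ (Wof B T) (j, i)
          = if (n * (m * (j : ℕ) + lam j) + (j : ℕ) < n * (m * (i : ℕ) + lam i) + (i : ℕ)
              ∧ n * (m * (i : ℕ) + lam i) + (i : ℕ)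
                < n * (m * (j : ℕ) + lam j) + (j : ℕ) + m * n)
              then 1 else 0 := by
        rw [indp_eval]
        by_cases hk : n * (m * (j : ℕ) + lam j) + (j : ℕ)
              < n * (m * (i : ℕ) + lam i) + (i : ℕ)
            ∧ n * (m * (i : ℕ) + lam i) + (i : ℕ)
              < n * (m * (j : ℕ) + lam j) + (j : ℕ) + m * n
        · rw [if_pos ⟨mem_Eof.mpr ⟨hS.2, hS.1, hk.1, hk.2⟩, hjW, hiW⟩, if_pos hk]
        · rw [if_neg ?_, if_neg hk]
          rintro ⟨hmem, -, -⟩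
          have h0 := mem_Eof.mp hmem
          dsimp only at h0
          exact hk ⟨h0.2.2.1, h0.2.2.2⟩
      rw [hs1, hs2, hσs1, hσs2, hind1, hind2, eterm_eval m lam i j hlj,
        contrib_eval2 m lam i j hlj]
      have harith := arith2 m n (i : ℕ) (j : ℕ) (lam i) (lam j)
        (m * (i : ℕ) + lam i) (m * (j : ℕ) + lam j) i.isLt j.isLt hij' hlj
        (hcol_aux m lam i j hij')
      simp only [add_zero, zero_add]
      exact harith
    · have horder := skel_order (B := B) hS
      have hσgt : σ j < σ i := by
        have h1 : ¬ σ i < σ j := fun hh => by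
          have := horder.1.mpr hh; omega
        have h2 : ¬ σ i = σ j := fun hh => by
          have := horder.2.mpr hh; omega
        omega
      have hσs1 : summand m lam σ (i, j) = 0 := by
        rw [summand_eval, if_neg (by omega : ¬ σ i < σ j),
          if_neg (fun hh => by omega)]
      have hσs2 : summand m lam σ (j, i) = contrib m (cell lam j) (cell lam i) := by
        rw [summand_eval, if_pos hσgt]
      have hind1 : indp m lam B σ (Wof B T) (i, j) = 0 := by
        rw [indp_eval]
        apply if_neg
        rintro ⟨hmem, -, -⟩
        have h0 := mem_Eof.mp hmem
        exact hS ⟨h0.1, h0.2.1⟩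
      have hind2 : indp m lam B σ (Wof B T) (j, i) = 0 := by
        rw [indp_eval]
        apply if_neg
        rintro ⟨hmem, -, -⟩
        have h0 := mem_Eof.mp hmem
        exact hS ⟨h0.2.1, h0.1⟩
      rw [hs1, hs2, hσs1, hσs2, hind1, hind2]
      omega

lemma dinv_decomp (m : ℕ) {n : ℕ} (lam : Fin n → ℕ) (B : ℕ) (T : Fin n → ℕ)
    (hlam1 : ∀ i j : Fin n, i ≤ j → lam j ≤ lam i) :
    dinvm m lam T = dinvm m lam (skel B T)
      + ascE (Eof m lam B (skel B T)) (Wof B T) := by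
  classical
  rw [dinvm_eq_sum m lam T, dinvm_eq_sum m lam (skel B T),
    asc_as_sum m lam B (skel B T) (Wof B T)]
  have hd1 : ∀ i : Fin n, summand m lam T (i, i) = 0 := by
    intro i
    rw [summand_eval, if_neg (lt_irrefl _), if_neg (fun hh => lt_irrefl i hh.2)]
  have hd2 : ∀ i : Fin n, summand m lam (skel B T) (i, i) = 0 := by
    intro i
    rw [summand_eval, if_neg (lt_irrefl _), if_neg (fun hh => lt_irrefl i hh.2)]
  have hd3 : ∀ i : Fin n, indp m lam B (skel B T) (Wof B T) (i, i) = 0 := by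
    intro i
    rw [indp_eval, if_neg ?_]
    rintro ⟨hmem, -, -⟩
    have h0 := mem_Eof.mp hmem
    dsimp only at h0
    omega
  rw [sum_pair_split _ hd1, sum_pair_split _ hd2, sum_pair_split _ hd3,
    ← Finset.sum_add_distrib]
  apply Finset.sum_congr rfl
  intro p hp
  rcases Finset.mem_filter.mp hp with ⟨-, hlt⟩
  exact pair_identity m lam B T hlam1 p.1 p.2 hlt

end PairId


section Fiber

noncomputable def phi {γ : Type} [DecidableEq γ] (s t : Finset γ) (W : γ) : γ :=
  if h : s.card = t.card ∧ W ∈ s then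
    ((Finset.equivOfCardEq h.1) ⟨W, h.2⟩ : {x // x ∈ t}).val
  else W

noncomputable def psi {γ : Type} [DecidableEq γ] (s t : Finset γ) (W : γ) : γ :=
  if h : s.card = t.card ∧ W ∈ t then
    ((Finset.equivOfCardEq h.1).symm ⟨W, h.2⟩ : {x // x ∈ s}).val
  else W

lemma phi_mem {γ : Type} [DecidableEq γ] (s t : Finset γ) (h : s.card = t.card)
    {W : γ} (hW : W ∈ s) : phi s t W ∈ t := by
  rw [phi, dif_pos ⟨h, hW⟩]
  exact ((Finset.equivOfCardEq h) ⟨W, hW⟩).2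

lemma psi_mem {γ : Type} [DecidableEq γ] (s t : Finset γ) (h : s.card = t.card)
    {W : γ} (hW : W ∈ t) : psi s t W ∈ s := by
  rw [psi, dif_pos ⟨h, hW⟩]
  exact ((Finset.equivOfCardEq h).symm ⟨W, hW⟩).2

lemma phi_eval {γ : Type} [DecidableEq γ] {s t : Finset γ} (h : s.card = t.card)
    {W : γ} (hW : W ∈ s) :
    phi s t W = ((Finset.equivOfCardEq h) ⟨W, hW⟩ : {x // x ∈ t}).val := by
  unfold phi
  rw [dif_pos ⟨h, hW⟩]

lemma psi_eval {γ : Type} [DecidableEq γ] {s t : Finset γ} (h : s.card = t.card)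
    {W : γ} (hW : W ∈ t) :
    psi s t W = ((Finset.equivOfCardEq h).symm ⟨W, hW⟩ : {x // x ∈ s}).val := by
  unfold psi
  rw [dif_pos ⟨h, hW⟩]

lemma psi_phi {γ : Type} [DecidableEq γ] (s t : Finset γ) (h : s.card = t.card)
    {W : γ} (hW : W ∈ s) : psi s t (phi s t W) = W := by
  rw [phi_eval h hW, psi_eval h ((Finset.equivOfCardEq h) ⟨W, hW⟩).2]
  rw [Subtype.coe_eta, Equiv.symm_apply_apply]

lemma phi_psi {γ : Type} [DecidableEq γ] (s t : Finset γ) (h : s.card = t.card)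
    {W : γ} (hW : W ∈ t) : phi s t (psi s t W) = W := by
  rw [psi_eval h hW, phi_eval h ((Finset.equivOfCardEq h).symm ⟨W, hW⟩).2]
  rw [Subtype.coe_eta, Equiv.apply_symm_apply]

/-- the fiber of tableaux over a fixed skeleton. -/
noncomputable def Fib (m : ℕ) {n : ℕ} (lam : Fin n → ℕ) (B k : ℕ)
    (σ : Fin n → ℕ) (p : ℕ) : Finset (Finset (Fin n)) :=
  cntSet (Vof B σ) (Eof m lam B σ) (Lof m lam B σ) p (k - dinvm m lam σ)

lemma Fib_card (m : ℕ) {n : ℕ} (lam : Fin n → ℕ) (B k : ℕ) (σ : Fin n → ℕ) (p : ℕ) :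
    (Fib m lam B k σ p).card
      = cnt (Vof B σ) (Eof m lam B σ) (Lof m lam B σ) p (k - dinvm m lam σ) := rfl

lemma mem_Fib {m : ℕ} {n : ℕ} {lam : Fin n → ℕ} {B k : ℕ} {σ : Fin n → ℕ}
    {p : ℕ} {W : Finset (Fin n)} :
    W ∈ Fib m lam B k σ p ↔ W ⊆ Vof B σ ∧
      (∀ l ∈ Lof m lam B σ, l.1 ∉ W ∧ l.2 ∈ W) ∧ W.card = p ∧
      ascE (Eof m lam B σ) W = k - dinvm m lam σ := mem_cntSet

lemma skel_ne {B : ℕ} {n : ℕ} (T : Fin n → ℕ) (i : Fin n) : skel B T i ≠ B + 1 := by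
  unfold skel
  by_cases h : T i = B + 1
  · rw [if_pos h]; omega
  · rw [if_neg h]; exact h

lemma skel_unsk {B : ℕ} {n : ℕ} (σ : Fin n → ℕ) (W : Finset (Fin n))
    (hσ : ∀ i, σ i ≠ B + 1) : skel B (unsk B σ W) = σ := by
  funext i
  unfold skel unsk
  by_cases h : σ i = B
  · rw [if_pos h]
    by_cases hW : i ∈ W
    · rw [if_pos hW, if_pos rfl, h]
    · rw [if_neg hW, if_neg (by omega : ¬ B = B + 1), h]
  · rw [if_neg h, if_neg (hσ i)]

lemma Wof_unsk {B : ℕ} {n : ℕ} (σ : Fin n → ℕ) (W : Finset (Fin n))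
    (hσ : ∀ i, σ i ≠ B + 1) (hW : W ⊆ Vof B σ) : Wof B (unsk B σ W) = W := by
  ext i
  rw [mem_Wof]
  unfold unsk
  by_cases h : σ i = B
  · rw [if_pos h]
    by_cases hW' : i ∈ W
    · rw [if_pos hW']
      exact ⟨fun _ => hW', fun _ => rfl⟩
    · rw [if_neg hW']
      exact ⟨fun hh => absurd hh (by omega), fun hh => absurd hh hW'⟩
  · rw [if_neg h]
    constructor
    · intro hh
      exact absurd hh (hσ i)
    · intro hh
      exact absurd ((Finset.mem_filter.mp (hW hh)).2) h

lemma unsk_skel_self {B : ℕ} {n : ℕ} (T : Fin n → ℕ) :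
    unsk B (skel B T) (Wof B T) = T := by
  funext i
  unfold unsk skel
  by_cases h : T i = B + 1
  · rw [if_pos h, if_pos rfl, if_pos (mem_Wof.mpr h), h]
  · rw [if_neg h]
    by_cases h2 : T i = B
    · rw [if_pos h2, if_neg (fun hh => h (mem_Wof.mp hh)), h2]
    · rw [if_neg h2]

lemma ncard_val_eq_card (n : ℕ) (T : Fin n → ℕ) (v : ℕ) :
    Set.ncard {i : Fin n | T i = v} = (Finset.univ.filter (fun i => T i = v)).card := by
  classical
  rw [show {i : Fin n | T i = v} = ↑(Finset.univ.filter (fun i => T i = v)) by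
    ext i; simp]
  exact Set.ncard_coe_finset _

lemma Vof_skel_card {B : ℕ} {n : ℕ} (T : Fin n → ℕ) :
    (Vof B (skel B T)).card
      = (Finset.univ.filter (fun i => T i = B)).card
        + (Finset.univ.filter (fun i => T i = B + 1)).card := by
  classical
  have h1 : Vof B (skel B T)
      = Finset.univ.filter (fun i => T i = B) ∪ Finset.univ.filter (fun i => T i = B + 1) := by
    ext i
    unfold Vof
    simp only [Finset.mem_filter, Finset.mem_univ, true_and, Finset.mem_union]
    rw [skel_mem_iff]
  rw [h1, Finset.card_union_of_disjoint]
  rw [Finset.disjoint_left]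
  intro i hi1 hi2
  rcases Finset.mem_filter.mp hi1 with ⟨-, e1⟩
  rcases Finset.mem_filter.mp hi2 with ⟨-, e2⟩
  omega

lemma Wof_card_eq {B : ℕ} {n : ℕ} (T : Fin n → ℕ) :
    (Wof B T).card = (Finset.univ.filter (fun i => T i = B + 1)).card := rfl

end Fiber


section FiberMain

lemma fiber_in (m : ℕ) {n : ℕ} (lam : Fin n → ℕ) (B : ℕ) (T : Fin n → ℕ) (k q : ℕ)
    (hlam1 : ∀ i j : Fin n, i ≤ j → lam j ≤ lam i)
    (hT : IsSSYT lam T) (hd : dinvm m lam T = k)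
    (hq : (Finset.univ.filter (fun i => T i = B + 1)).card = q) :
    Wof B T ∈ Fib m lam B k (skel B T) q ∧ dinvm m lam (skel B T) ≤ k := by
  have hdec := dinv_decomp m lam B T hlam1
  constructor
  · apply mem_Fib.mpr
    refine ⟨?_, ?_, ?_, ?_⟩
    · intro i hi
      have : T i = B + 1 := mem_Wof.mp hi
      exact Finset.mem_filter.mpr ⟨Finset.mem_univ _, skel_mem_iff.mpr (Or.inr this)⟩
    · intro l hl
      rcases mem_Lof.mp hl with ⟨hl1, hl2, hl3, hl4⟩
      have hcol : SameCol lam l.1 l.2 := ⟨hl1.symm, hl2⟩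
      have hTlt := hT.2 l.1 l.2 hcol
      have hv1 := skel_mem_iff.mp hl3
      have hv2 := skel_mem_iff.mp hl4
      constructor
      · intro hw; have := mem_Wof.mp hw; omega
      · apply mem_Wof.mpr; omega
    · rw [Wof_card_eq]; exact hq
    · omega
  · omega

lemma fiber_out (m : ℕ) {n : ℕ} (lam : Fin n → ℕ) (B : ℕ) (hB : 1 ≤ B)
    (T : Fin n → ℕ) (k p' : ℕ)
    (hlam1 : ∀ i j : Fin n, i ≤ j → lam j ≤ lam i)
    (hT : IsSSYT lam T) (hd0 : dinvm m lam (skel B T) ≤ k)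
    {W' : Finset (Fin n)} (hW' : W' ∈ Fib m lam B k (skel B T) p') :
    IsSSYT lam (unsk B (skel B T) W') ∧
    dinvm m lam (unsk B (skel B T) W') = k ∧
    (Finset.univ.filter (fun i => unsk B (skel B T) W' i = B + 1)).card = p' ∧
    (Finset.univ.filter (fun i => unsk B (skel B T) W' i = B)).card + p'
      = (Vof B (skel B T)).card ∧
    (∀ v, v ≠ B → v ≠ B + 1 → ∀ i, (unsk B (skel B T) W' i = v ↔ T i = v)) ∧
    skel B (unsk B (skel B T) W') = skel B T ∧
    Wof B (unsk B (skel B T) W') = W' := by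
  classical
  rcases mem_Fib.mp hW' with ⟨hWV, hlocks, hcard, hasc⟩
  have hσne : ∀ i, skel B T i ≠ B + 1 := skel_ne T
  have hskelT' : skel B (unsk B (skel B T) W') = skel B T := skel_unsk _ W' hσne
  have hWofT' : Wof B (unsk B (skel B T) W') = W' := Wof_unsk _ W' hσne hWV
  have hσeq : ∀ i, skel B T i ≠ B → skel B T i = T i := by
    intro i h
    by_cases hc : T i = B + 1
    · exfalso; apply h; unfold skel; rw [if_pos hc]
    · unfold skel; rw [if_neg hc]
  have hval1 : ∀ i, skel B T i = B → i ∈ W' → unsk B (skel B T) W' i = B + 1 := by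
    intro i h hw; unfold unsk; rw [if_pos h, if_pos hw]
  have hval2 : ∀ i, skel B T i = B → i ∉ W' → unsk B (skel B T) W' i = B := by
    intro i h hw; unfold unsk; rw [if_pos h, if_neg hw]
  have hval3 : ∀ i, skel B T i ≠ B → unsk B (skel B T) W' i = T i := by
    intro i h; unfold unsk; rw [if_neg h]; exact hσeq i h
  have hWVmem : ∀ i ∈ W', skel B T i = B := by
    intro i hi
    exact (Finset.mem_filter.mp (hWV hi)).2
  have hssyt : IsSSYT lam (unsk B (skel B T) W') := by
    constructor
    · intro i
      by_cases h : skel B T i = B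
      · by_cases hw : i ∈ W'
        · rw [hval1 i h hw]; omega
        · rw [hval2 i h hw]; omega
      · rw [hval3 i h]; exact hT.1 i
    · intro i j hcol
      rcases hcol with ⟨hc1, hc2⟩
      have hTij := hT.2 i j ⟨hc1, hc2⟩
      by_cases hi : skel B T i = B <;> by_cases hj : skel B T j = B
      · have hlk : (i, j) ∈ Lof m lam B (skel B T) :=
          mem_Lof.mpr ⟨hc1.symm, hc2, hi, hj⟩
        have hlp := hlocks (i, j) hlk
        rw [hval2 i hi hlp.1, hval1 j hj hlp.2]
        omega
      · have hTiv := skel_mem_iff.mp hi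
        have e2 : unsk B (skel B T) W' j = T j := hval3 j hj
        have hjne : T j ≠ B + 1 := fun hc => hj (skel_mem_iff.mpr (Or.inr hc))
        have hjne2 : T j ≠ B := fun hc => hj (skel_mem_iff.mpr (Or.inl hc))
        by_cases hw : i ∈ W'
        · rw [hval1 i hi hw, e2]; omega
        · rw [hval2 i hi hw, e2]; omega
      · have hTjv := skel_mem_iff.mp hj
        have e1 : unsk B (skel B T) W' i = T i := hval3 i hi
        have hine : T i ≠ B + 1 := fun hc => hi (skel_mem_iff.mpr (Or.inr hc))
        have hine2 : T i ≠ B := fun hc => hi (skel_mem_iff.mpr (Or.inl hc))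
        by_cases hw : j ∈ W'
        · rw [hval1 j hj hw, e1]; omega
        · rw [hval2 j hj hw, e1]; omega
      · rw [hval3 i hi, hval3 j hj]; exact hTij
  refine ⟨hssyt, ?_, ?_, ?_, ?_, hskelT', hWofT'⟩
  · have hdec := dinv_decomp m lam B (unsk B (skel B T) W') hlam1
    rw [hskelT', hWofT'] at hdec
    omega
  · have : Finset.univ.filter (fun i => unsk B (skel B T) W' i = B + 1)
        = Wof B (unsk B (skel B T) W') := rfl
    rw [this, hWofT', hcard]
  · have hseteq : Finset.univ.filter (fun i => unsk B (skel B T) W' i = B)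
        = Vof B (skel B T) \ W' := by
      ext i
      simp only [Finset.mem_filter, Finset.mem_univ, true_and, Finset.mem_sdiff]
      constructor
      · intro h
        by_cases hi : skel B T i = B
        · refine ⟨Finset.mem_filter.mpr ⟨Finset.mem_univ _, hi⟩, ?_⟩
          intro hw
          rw [hval1 i hi hw] at h
          omega
        · rw [hval3 i hi] at h
          exact absurd (skel_mem_iff.mpr (Or.inl h)) hi
      · rintro ⟨hv, hw⟩
        have hi := (Finset.mem_filter.mp hv).2
        exact hval2 i hi hw
    rw [hseteq, Finset.card_sdiff_of_subset hWV, hcard]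
    have := Finset.card_le_card hWV
    omega
  · intro v hv1 hv2 i
    by_cases hi : skel B T i = B
    · have hTiv := skel_mem_iff.mp hi
      by_cases hw : i ∈ W'
      · rw [hval1 i hi hw]
        constructor
        · intro h; exact absurd h.symm hv2
        · intro h; omega
      · rw [hval2 i hi hw]
        constructor
        · intro h; exact absurd h.symm hv1
        · intro h; omega
    · rw [hval3 i hi]

lemma Fib_card_symm (m : ℕ) {n : ℕ} (hm : 1 ≤ m) (lam : Fin n → ℕ) (B k : ℕ)
    (T : Fin n → ℕ) (hT : IsSSYT lam T) (p : ℕ)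
    (hp : p ≤ (Vof B (skel B T)).card) :
    (Fib m lam B k (skel B T) p).card
      = (Fib m lam B k (skel B T) ((Vof B (skel B T)).card - p)).card :=
  core_symm (key m lam) (key_inj m lam)
    ((Eof m lam B (skel B T)).card + (Vof B (skel B T)).card)
    (Vof B (skel B T)) (Eof m lam B (skel B T)) (Lof m lam B (skel B T))
    le_rfl Eof_hE Eof_hconv (Lof_hLV hm) (Lof_pairwise hT) (Lof_hLE hm)
    p (k - dinvm m lam (skel B T)) hp

end FiberMain


section SwapCount

lemma swap_count (m : ℕ) {n : ℕ} (hm : 1 ≤ m) (lam : Fin n → ℕ)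
    (hlam1 : ∀ i j : Fin n, i ≤ j → lam j ≤ lam i)
    (c : ℕ) (μ ν : List ℕ)
    (h1 : ν.getD c 0 = μ.getD (c + 1) 0) (h2 : ν.getD (c + 1) 0 = μ.getD c 0)
    (h3 : ∀ a, a ≠ c → a ≠ c + 1 → ν.getD a 0 = μ.getD a 0) (k : ℕ) :
    {T : Fin n → ℕ | IsSSYT lam T ∧ HasContent T μ ∧ dinvm m lam T = k}.ncard
      = {T : Fin n → ℕ | IsSSYT lam T ∧ HasContent T ν ∧ dinvm m lam T = k}.ncard := by
  classical
  set P := μ.getD c 0 with hPdef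
  set Q := μ.getD (c + 1) 0 with hQdef
  set Φ : (Fin n → ℕ) → (Fin n → ℕ) := fun T =>
    unsk (c + 1) (skel (c + 1) T)
      (phi (Fib m lam (c + 1) k (skel (c + 1) T) Q)
        (Fib m lam (c + 1) k (skel (c + 1) T) P) (Wof (c + 1) T)) with hPhi
  set Ψ : (Fin n → ℕ) → (Fin n → ℕ) := fun T =>
    unsk (c + 1) (skel (c + 1) T)
      (psi (Fib m lam (c + 1) k (skel (c + 1) T) Q)
        (Fib m lam (c + 1) k (skel (c + 1) T) P) (Wof (c + 1) T)) with hPsi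
  have hcontent : ∀ (T : Fin n → ℕ) (ρ : List ℕ), HasContent T ρ →
      ∀ a : ℕ, (Finset.univ.filter (fun i => T i = a + 1)).card = ρ.getD a 0 := by
    intro T ρ hC a
    rw [← ncard_val_eq_card]
    exact hC a
  have main : ∀ T, (IsSSYT lam T ∧ HasContent T μ ∧ dinvm m lam T = k) →
      ((IsSSYT lam (Φ T) ∧ HasContent (Φ T) ν ∧ dinvm m lam (Φ T) = k)
        ∧ Ψ (Φ T) = T) := by
    rintro T ⟨hT, hC, hd⟩
    have hVcard : (Vof (c + 1) (skel (c + 1) T)).card = P + Q := by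
      rw [Vof_skel_card, hcontent T μ hC c, hcontent T μ hC (c + 1)]
    have hin := fiber_in m lam (c + 1) T k Q hlam1 hT hd (hcontent T μ hC (c + 1))
    have hcards : (Fib m lam (c + 1) k (skel (c + 1) T) Q).card
        = (Fib m lam (c + 1) k (skel (c + 1) T) P).card := by
      have := Fib_card_symm m hm lam (c + 1) k T hT Q (by omega)
      rwa [show (Vof (c + 1) (skel (c + 1) T)).card - Q = P by omega] at this
    have hW'mem : phi (Fib m lam (c + 1) k (skel (c + 1) T) Q)
        (Fib m lam (c + 1) k (skel (c + 1) T) P) (Wof (c + 1) T)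
        ∈ Fib m lam (c + 1) k (skel (c + 1) T) P := phi_mem _ _ hcards hin.1
    have hout := fiber_out m lam (c + 1) (by omega) T k P hlam1 hT hin.2 hW'mem
    obtain ⟨ho1, ho2, ho3, ho4, ho5, ho6, ho7⟩ := hout
    refine ⟨⟨ho1, ?_, ho2⟩, ?_⟩
    · intro a
      rw [ncard_val_eq_card]
      simp only [hPhi]
      by_cases ha1 : a = c
      · subst ha1
        rw [h1]
        omega
      · by_cases ha2 : a = c + 1
        · subst ha2
          rw [h2]
          exact ho3
        · rw [h3 a ha1 ha2, ← hcontent T μ hC a]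
          congr 1
          apply Finset.filter_congr
          intro i _
          have := ho5 (a + 1) (by omega) (by omega) i
          constructor
          · intro hh; exact (this.mp hh)
          · intro hh; exact (this.mpr hh)
    · show unsk (c + 1) (skel (c + 1) (Φ T))
        (psi (Fib m lam (c + 1) k (skel (c + 1) (Φ T)) Q)
          (Fib m lam (c + 1) k (skel (c + 1) (Φ T)) P) (Wof (c + 1) (Φ T))) = T
      rw [ho6, ho7]
      rw [psi_phi _ _ hcards hin.1]
      exact unsk_skel_self T
  have main' : ∀ T, (IsSSYT lam T ∧ HasContent T ν ∧ dinvm m lam T = k) →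
      ((IsSSYT lam (Ψ T) ∧ HasContent (Ψ T) μ ∧ dinvm m lam (Ψ T) = k)
        ∧ Φ (Ψ T) = T) := by
    rintro T ⟨hT, hC, hd⟩
    have hVcard : (Vof (c + 1) (skel (c + 1) T)).card = Q + P := by
      rw [Vof_skel_card, hcontent T ν hC c, hcontent T ν hC (c + 1), h1, h2]
    have hin := fiber_in m lam (c + 1) T k P hlam1 hT hd
      (by rw [hcontent T ν hC (c + 1), h2])
    have hcards : (Fib m lam (c + 1) k (skel (c + 1) T) Q).card
        = (Fib m lam (c + 1) k (skel (c + 1) T) P).card := by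
      have := Fib_card_symm m hm lam (c + 1) k T hT Q (by omega)
      rwa [show (Vof (c + 1) (skel (c + 1) T)).card - Q = P by omega] at this
    have hW'mem : psi (Fib m lam (c + 1) k (skel (c + 1) T) Q)
        (Fib m lam (c + 1) k (skel (c + 1) T) P) (Wof (c + 1) T)
        ∈ Fib m lam (c + 1) k (skel (c + 1) T) Q := psi_mem _ _ hcards hin.1
    have hout := fiber_out m lam (c + 1) (by omega) T k Q hlam1 hT hin.2 hW'mem
    obtain ⟨ho1, ho2, ho3, ho4, ho5, ho6, ho7⟩ := hout
    refine ⟨⟨ho1, ?_, ho2⟩, ?_⟩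
    · intro a
      rw [ncard_val_eq_card]
      simp only [hPsi]
      by_cases ha1 : a = c
      · subst ha1
        omega
      · by_cases ha2 : a = c + 1
        · subst ha2
          rw [← hQdef]
          exact ho3
        · rw [← h3 a ha1 ha2, ← hcontent T ν hC a]
          congr 1
          apply Finset.filter_congr
          intro i _
          have := ho5 (a + 1) (by omega) (by omega) i
          constructor
          · intro hh; exact (this.mp hh)
          · intro hh; exact (this.mpr hh)
    · show unsk (c + 1) (skel (c + 1) (Ψ T))
        (phi (Fib m lam (c + 1) k (skel (c + 1) (Ψ T)) Q)
          (Fib m lam (c + 1) k (skel (c + 1) (Ψ T)) P) (Wof (c + 1) (Ψ T))) = T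
      rw [ho6, ho7]
      rw [phi_psi _ _ hcards hin.1]
      exact unsk_skel_self T
  have himg : Φ '' {T : Fin n → ℕ | IsSSYT lam T ∧ HasContent T μ ∧ dinvm m lam T = k}
      = {T : Fin n → ℕ | IsSSYT lam T ∧ HasContent T ν ∧ dinvm m lam T = k} := by
    apply subset_antisymm
    · rintro _ ⟨T, hT, rfl⟩
      exact (main T hT).1
    · intro T' hT'
      exact ⟨Ψ T', (main' T' hT').1, (main' T' hT').2⟩
  have hinj : Set.InjOn Φ
      {T : Fin n → ℕ | IsSSYT lam T ∧ HasContent T μ ∧ dinvm m lam T = k} := by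
    intro T1 hT1 T2 hT2 heq
    have e1 := (main T1 hT1).2
    have e2 := (main T2 hT2).2
    rw [← e1, ← e2, heq]
  rw [← himg, Set.ncard_image_of_injOn hinj]

end SwapCount


section PermChain

def AdjSwap (μ ν : List ℕ) : Prop :=
  ∃ l₁ x y l₂, μ = l₁ ++ x :: y :: l₂ ∧ ν = l₁ ++ y :: x :: l₂

lemma adjswap_cons {a : ℕ} {l l' : List ℕ} (h : AdjSwap l l') :
    AdjSwap (a :: l) (a :: l') := by
  obtain ⟨l₁, x, y, l₂, h1, h2⟩ := h
  exact ⟨a :: l₁, x, y, l₂, by rw [h1]; rfl, by rw [h2]; rfl⟩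

lemma chain_cons {a : ℕ} {l l' : List ℕ}
    (h : Relation.ReflTransGen AdjSwap l l') :
    Relation.ReflTransGen AdjSwap (a :: l) (a :: l') :=
  Relation.ReflTransGen.lift (fun t => a :: t) (fun _ _ hh => adjswap_cons hh) _ _ h

lemma bubble (a : ℕ) : ∀ (v₁ v₂ : List ℕ),
    Relation.ReflTransGen AdjSwap (a :: (v₁ ++ v₂)) (v₁ ++ a :: v₂) := by
  intro v₁
  induction v₁ with
  | nil => intro v₂; exact Relation.ReflTransGen.refl
  | cons b v₁ ih =>
    intro v₂
    have h1 : AdjSwap (a :: b :: (v₁ ++ v₂)) (b :: a :: (v₁ ++ v₂)) :=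
      ⟨[], a, b, v₁ ++ v₂, rfl, rfl⟩
    exact Relation.ReflTransGen.head h1 (chain_cons (ih v₂))

lemma perm_to_chain : ∀ {μ ν : List ℕ}, μ.Perm ν →
    Relation.ReflTransGen AdjSwap μ ν := by
  intro μ
  induction μ with
  | nil =>
    intro ν h
    rw [← h.nil_eq]
  | cons a μ' ih =>
    intro ν h
    have ha : a ∈ ν := h.mem_iff.mp (List.mem_cons_self)
    obtain ⟨v₁, v₂, rfl⟩ := List.append_of_mem ha
    have h2 : μ'.Perm (v₁ ++ v₂) := (h.trans List.perm_middle).cons_inv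
    exact (chain_cons (ih h2)).trans (bubble a v₁ v₂)

lemma adjswap_count (m : ℕ) {n : ℕ} (hm : 1 ≤ m) (lam : Fin n → ℕ)
    (hlam1 : ∀ i j : Fin n, i ≤ j → lam j ≤ lam i)
    {μ ν : List ℕ} (h : AdjSwap μ ν) (k : ℕ) :
    {T : Fin n → ℕ | IsSSYT lam T ∧ HasContent T μ ∧ dinvm m lam T = k}.ncard
      = {T : Fin n → ℕ | IsSSYT lam T ∧ HasContent T ν ∧ dinvm m lam T = k}.ncard := by
  obtain ⟨l₁, x, y, l₂, rfl, rfl⟩ := h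
  apply swap_count m hm lam hlam1 l₁.length
  · rw [List.getD_append_right _ _ _ _ le_rfl,
      List.getD_append_right _ _ _ _ (by omega)]
    rw [Nat.sub_self, show l₁.length + 1 - l₁.length = 1 from by omega]
    rfl
  · rw [List.getD_append_right _ _ _ _ (by omega),
      List.getD_append_right _ _ _ _ le_rfl]
    rw [Nat.sub_self, show l₁.length + 1 - l₁.length = 1 from by omega]
    rfl
  · intro a ha1 ha2
    by_cases hlt : a < l₁.length
    · rw [List.getD_append _ _ _ _ hlt, List.getD_append _ _ _ _ hlt]
    · have h2 : l₁.length + 2 ≤ a := by omega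
      rw [List.getD_append_right _ _ _ _ (by omega),
        List.getD_append_right _ _ _ _ (by omega)]
      have h3 : a - l₁.length = (a - l₁.length - 2) + 1 + 1 := by omega
      rw [h3]
      rw [List.getD_cons_succ, List.getD_cons_succ, List.getD_cons_succ,
        List.getD_cons_succ]

end PermChain

/-- Symmetry of `D_n^{(m),λ}(z;q)`: for any two rearranged contents `μ`, `ν`,
the coefficientwise (in `q`) counts of semistandard tableaux of the vertical
strip `(λ+(1^n))/λ`, `λ ⊆ mδ_n`, by the statistic `dinv_m` agree. -/
theorem statement12 (m n : ℕ) (hm : 1 ≤ m) (hn : 1 ≤ n)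
    (lam : Fin n → ℕ) (hlam : IsShape m n lam)
    (μ ν : List ℕ) (hpos : ∀ a ∈ μ, 0 < a) (hsum : μ.sum = n) (hperm : μ.Perm ν)
    (k : ℕ) :
    Set.ncard {T : Fin n → ℕ | IsSSYT lam T ∧ HasContent T μ ∧ dinvm m lam T = k} =
    Set.ncard {T : Fin n → ℕ | IsSSYT lam T ∧ HasContent T ν ∧ dinvm m lam T = k} := by
  have hchain := perm_to_chain hperm
  clear hperm hpos hsum
  induction hchain with
  | refl => rfl
  | tail h1 h2 ih =>
    rw [ih]
    exact adjswap_count m hm lam hlam.1 h2 k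

end HHL
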